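/- arXiv:1703.04974 — 9 statements merged into one kernel-verified Lean document; each statement's English description precedes it below -/
import Mathlib

section
/- For the cycle C_n on n vertices and any integer k with 2 ≤ k ≤ n, sdiam_k(C_n) = ⌊n(k−1)/k⌋. -/
open SimpleGraph

/-- The Steiner distance of a vertex set `S` in a graph `G`: the minimum number of edges
of a connected subgraph of `G` whose vertex set contains `S`. -/
noncomputable def steinerDist {V : Type*} (G : SimpleGraph V) (S : Set V) : ℕ :=
  sInf {m : ℕ | ∃ H : G.Subgraph, H.Connected ∧ S ⊆ H.verts ∧ H.edgeSet.ncard = m}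

/-- The Steiner `k`-diameter of `G`: the maximum Steiner distance over all `k`-element
vertex subsets. -/
noncomputable def sdiam {V : Type*} [Fintype V] (G : SimpleGraph V) (k : ℕ) : ℕ :=
  sSup {m : ℕ | ∃ S : Finset V, S.card = k ∧ steinerDist G ↑S = m}

/-- The maximum degree of `G`. -/
noncomputable def maxDeg {V : Type*} [Fintype V] (G : SimpleGraph V) : ℕ :=
  Finset.univ.sup fun v => (G.neighborSet v).ncard

/-- The minimum degree of `G`. -/
noncomputable def minDeg {V : Type*} [Fintype V] (G : SimpleGraph V) : ℕ :=
  sInf {d : ℕ | ∃ v : V, (G.neighborSet v).ncard = d}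

/-- `e3 n ℓ d` : minimum number of edges of a graph of order `n` with maximum degree `ℓ`
and Steiner 3-diameter at most `d` (`⊤` if no such graph exists). -/
noncomputable def e3 (n ℓ d : ℕ) : ℕ∞ :=
  sInf {m : ℕ∞ | ∃ G : SimpleGraph (Fin n),
    maxDeg G = ℓ ∧ sdiam G 3 ≤ d ∧ (G.edgeSet.ncard : ℕ∞) = m}


set_option linter.unusedSectionVars false
set_option linter.unusedVariables false

section helpers

open Fin.CommRing Fin.NatCast


lemma euclid (x k : ℕ) (hk : 0 < k) : ∃ d r, x / k = d ∧ r < k ∧ x = k * d + r :=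
  ⟨x / k, x % k, rfl, Nat.mod_lt _ hk, (Nat.div_add_mod x k).symm⟩

lemma nat_g_facts (n k : ℕ) (hk : 0 < k) :
    n ≤ k * ((n + k - 1) / k) ∧ k * ((n + k - 1) / k) ≤ n + k - 1 := by
  obtain ⟨g, r, hg, hr, hE⟩ := euclid (n + k - 1) k hk
  rw [hg]
  omega

-- (I) d + g = n  (d := n(k-1)/k, g := ⌈n/k⌉)
lemma nat_d_eq (n k : ℕ) (hk2 : 2 ≤ k) (hkn : k ≤ n) :
    n * (k - 1) / k = n - (n + k - 1) / k ∧ n * (k-1) / k + (n + k - 1) / k = n := by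
  have hk0 : 0 < k := by omega
  obtain ⟨d, r1, hd, hr1, hE1⟩ := euclid (n * (k-1)) k hk0
  obtain ⟨g, r2, hg, hr2, hE2⟩ := euclid (n + k - 1) k hk0
  rw [hd, hg]
  have e1 : n * (k-1) + n = k * n := by
    calc n * (k-1) + n = n * ((k-1) + 1) := by ring
    _ = n * k := by rw [Nat.sub_add_cancel (by omega)]
    _ = k * n := by ring
  have c1 : ¬ (d + g ≤ n - 1) := by
    intro h
    have h2 : k * (d+g) ≤ k * (n-1) := Nat.mul_le_mul_left k h
    have h3 : k * (d+g) = k*d + k*g := by ring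
    have h4 : k * (n-1) + k = k * n := by
      calc k * (n-1) + k = k * ((n-1)+1) := by ring
      _ = k * n := by rw [Nat.sub_add_cancel (by omega)]
    omega
  have c2 : ¬ (n + 1 ≤ d + g) := by
    intro h
    have h2 : k * (n+1) ≤ k * (d+g) := Nat.mul_le_mul_left k h
    have h3 : k * (d+g) = k*d + k*g := by ring
    have h4 : k * (n+1) = k * n + k := by ring
    omega
  omega

-- (II) gap bound
lemma nat_gap (n k j : ℕ) (hk : 0 < k) :
    (j+1) * n / k ≤ j * n / k + (n + k - 1) / k := by
  obtain ⟨a, r1, ha, hr1, hE1⟩ := euclid (j * n) k hk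
  obtain ⟨g, r2, hg, hr2, hE2⟩ := euclid (n + k - 1) k hk
  obtain ⟨b, r3, hb, hr3, hE3⟩ := euclid ((j+1) * n) k hk
  rw [ha, hg, hb]
  have e1 : (j+1) * n = j * n + n := by ring
  have h1 : k * b < k * (a + g + 1) := by
    have h3 : k * (a+g+1) = k*a + k*g + k := by ring
    omega
  have := Nat.lt_of_mul_lt_mul_left h1
  omega

-- strict monotonicity
lemma nat_spread_mono (n k j : ℕ) (hkn : k ≤ n) (hk : 0 < k) :
    j * n / k + 1 ≤ (j+1) * n / k := by
  rw [show (j+1)*n = j*n + n from by ring]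
  have h1 : (j*n + k) / k ≤ (j*n + n) / k := Nat.div_le_div_right (by omega)
  have h2 : (j*n + k)/k = j*n/k + 1 := by rw [Nat.add_div_right _ hk]
  omega

-- value bound
lemma nat_spread_le (n k j : ℕ) (hj : j ≤ k - 1) :
    j * n / k ≤ n * (k-1) / k := by
  have h : j * n ≤ n * (k-1) := by
    calc j * n ≤ (k-1) * n := Nat.mul_le_mul_right n hj
    _ = n * (k-1) := by ring
  exact Nat.div_le_div_right h

section fin
variable {n : ℕ} [NeZero n]


lemma fin_one_val (hn : 2 ≤ n) : (1 : Fin n).val = 1 := by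
  rw [Fin.val_one']
  exact Nat.mod_eq_of_lt (by omega)

lemma fin_sub_val (x y : Fin n) :
    (x - y).val = if y.val ≤ x.val then x.val - y.val else x.val + n - y.val := by
  rw [Fin.sub_def]
  simp only []
  have hx := x.isLt
  have hy := y.isLt
  split
  · rename_i h
    have : n - y.val + x.val = n + (x.val - y.val) := by omega
    rw [this, Nat.add_mod_left]
    exact Nat.mod_eq_of_lt (by omega)
  · rw [Nat.mod_eq_of_lt (by omega)]
    omega

lemma fin_val_add_one (hn : 2 ≤ n) (y : Fin n) (h : y + 1 ≠ 0) : (y + 1).val = y.val + 1 := by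
  rw [Fin.add_def, fin_one_val hn]
  have hy := y.isLt
  rcases Nat.lt_or_ge (y.val + 1) n with h1 | h1
  · exact Nat.mod_eq_of_lt h1
  · exfalso
    apply h
    have hval : y.val = n - 1 := by omega
    apply Fin.ext
    simp only [Fin.add_def, fin_one_val hn, Fin.val_zero]
    show (y.val + 1) % n = 0
    rw [hval, show n - 1 + 1 = n by omega, Nat.mod_self]

/-- step lemma : if `a + 1 ≠ c` then position of `a+1` rel. `c` is position of `a` plus 1. -/
lemma fin_step (hn : 2 ≤ n) {a c : Fin n} (h : a + 1 ≠ c) :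
    (a + 1 - c).val = (a - c).val + 1 := by
  have e : a + 1 - c = (a - c) + 1 := by ring
  rw [e]
  exact fin_val_add_one hn _ (by rw [← e]; exact sub_ne_zero.mpr h)

lemma fin_eq_add_of_sub_val_one (hn : 2 ≤ n) {x a : Fin n} (h : (x - a).val = 1) :
    x = a + 1 := by
  have : x - a = 1 := Fin.ext (by rw [h, fin_one_val hn])
  rw [sub_eq_iff_eq_add] at this
  rw [this]; ring

lemma fin_pos_lt (x c : Fin n) : (x - c).val ≤ n - 1 := by
  have := (x - c).isLt; omega

/-- injectivity of the edge enumeration -/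
lemma edge_injOn (hn : 2 ≤ n) (c : Fin n) :
    Set.InjOn (fun i : ℕ => s(c + (i : Fin n), c + ((i + 1 : ℕ) : Fin n))) (Set.Iio (n - 1)) := by
  intro i hi j hj h
  simp only [Set.mem_Iio] at hi hj
  have hi' : i < n := by omega
  have hj' : j < n := by omega
  have hi1 : i + 1 < n + 1 := by omega
  simp only [Sym2.eq_iff] at h
  rcases h with ⟨h1, -⟩ | ⟨h1, h2⟩
  · have := add_left_cancel h1
    have : ((i : Fin n)).val = ((j : Fin n)).val := by rw [this]
    rwa [Fin.val_cast_of_lt hi', Fin.val_cast_of_lt hj'] at this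
  · have e1 := add_left_cancel h1
    have e2 := add_left_cancel h2
    have f1 : ((i : Fin n)).val = (((j+1 : ℕ) : Fin n)).val := by rw [e1]
    have f2 : (((i+1:ℕ) : Fin n)).val = ((j : Fin n)).val := by rw [e2]
    rw [Fin.val_cast_of_lt hi', Fin.val_cast_of_lt (show j + 1 < n by omega)] at f1
    rw [Fin.val_cast_of_lt (show i + 1 < n by omega), Fin.val_cast_of_lt hj'] at f2
    omega



/-- the arc subgraph of the cycle: vertices `c, c+1, ..., c+L`, consecutive edges. -/
def arcSub (n : ℕ) [NeZero n] (hn : 2 ≤ n) (c : Fin n) (L : ℕ) (hL : L ≤ n - 1) :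
    (cycleGraph n).Subgraph where
  verts := {x | ∃ i ≤ L, x = c + (i : Fin n)}
  Adj x y := ∃ i < L, (x = c + (i : Fin n) ∧ y = c + ((i+1 : ℕ) : Fin n)) ∨
      (y = c + (i : Fin n) ∧ x = c + ((i+1 : ℕ) : Fin n))
  adj_sub := by
    rintro x y ⟨i, hi, ⟨rfl, rfl⟩ | ⟨rfl, rfl⟩⟩ <;>
    · rw [cycleGraph_adj']
      have e : ((i+1 : ℕ) : Fin n) = (i : Fin n) + 1 := by push_cast; ring
      have e2 : (c + ((i+1:ℕ) : Fin n)) - (c + (i : Fin n)) = 1 := by rw [e]; ring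
      first
      | exact Or.inr (by rw [e2, fin_one_val hn])
      | exact Or.inl (by rw [e2, fin_one_val hn])
  edge_vert := by
    rintro x y ⟨i, hi, ⟨rfl, rfl⟩ | ⟨rfl, rfl⟩⟩
    · exact ⟨i, by omega, rfl⟩
    · exact ⟨i+1, by omega, rfl⟩
  symm := by
    constructor
    rintro x y ⟨i, hi, h | h⟩
    · exact ⟨i, hi, Or.inr h⟩
    · exact ⟨i, hi, Or.inl h⟩

lemma arcSub_verts (hn : 2 ≤ n) (c : Fin n) (L : ℕ) (hL : L ≤ n - 1) (x : Fin n)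
    (hx : (x - c).val ≤ L) : x ∈ (arcSub n hn c L hL).verts := by
  refine ⟨(x - c).val, hx, ?_⟩
  rw [Fin.cast_val_eq_self]
  ring

lemma arcSub_connected (hn : 2 ≤ n) (c : Fin n) (L : ℕ) (hL : L ≤ n - 1) :
    (arcSub n hn c L hL).Connected := by
  rw [Subgraph.connected_iff]
  have hc : c ∈ (arcSub n hn c L hL).verts := ⟨0, by omega, by simp⟩
  constructor
  · have key : ∀ i (hi : i ≤ L),
        (arcSub n hn c L hL).coe.Reachable ⟨c + (i : Fin n), ⟨i, hi, rfl⟩⟩ ⟨c, hc⟩ := by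
      intro i
      induction i with
      | zero =>
        intro hi
        have h0 : (⟨c + ((0:ℕ) : Fin n), ⟨0, hi, rfl⟩⟩ : (arcSub n hn c L hL).verts) = ⟨c, hc⟩ :=
          Subtype.ext (by simp)
        rw [h0]
      | succ j ih =>
        intro hi
        have hadj : (arcSub n hn c L hL).Adj (c + ((j+1 : ℕ) : Fin n)) (c + (j : Fin n)) :=
          ⟨j, by omega, Or.inr ⟨rfl, rfl⟩⟩
        exact (hadj.coe).reachable.trans (ih (by omega))
    constructor
    rintro ⟨x, hx⟩ ⟨y, hy⟩
    obtain ⟨i, hi, rfl⟩ := hx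
    obtain ⟨j, hj, rfl⟩ := hy
    exact (key i hi).trans (key j hj).symm
  · exact ⟨c, hc⟩

lemma arcSub_edgeSet (hn : 2 ≤ n) (c : Fin n) (L : ℕ) (hL : L ≤ n - 1) :
    (arcSub n hn c L hL).edgeSet =
      (fun i : ℕ => s(c + (i : Fin n), c + ((i + 1 : ℕ) : Fin n))) '' (Set.Iio L) := by
  ext e
  induction e with
  | _ x y =>
    rw [Subgraph.mem_edgeSet]
    constructor
    · rintro ⟨i, hi, ⟨rfl, rfl⟩ | ⟨rfl, rfl⟩⟩
      · exact ⟨i, hi, rfl⟩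
      · exact ⟨i, hi, Sym2.eq_swap⟩
    · rintro ⟨i, hi, h⟩
      simp only [Sym2.eq_iff] at h
      rcases h with ⟨h1, h2⟩ | ⟨h1, h2⟩
      · exact ⟨i, hi, Or.inl ⟨h1.symm, h2.symm⟩⟩
      · exact ⟨i, hi, Or.inr ⟨h1.symm, h2.symm⟩⟩


lemma arcSub_ncard (hn : 2 ≤ n) (c : Fin n) (L : ℕ) (hL : L ≤ n - 1) :
    (arcSub n hn c L hL).edgeSet.ncard = L := by
  rw [arcSub_edgeSet, Set.ncard_image_of_injOn ((edge_injOn hn c).mono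
    (fun i hi => Set.mem_Iio.mpr (lt_of_lt_of_le (Set.mem_Iio.mp hi) hL)))]
  rw [Set.ncard_eq_toFinset_card']
  simp

/-- Any walk in a subgraph of the cycle missing the edge `(c-1, c)` covers all
consecutive edges between the positions (relative to `c`) of its endpoints. -/
lemma walk_edge_cover (hn : 2 ≤ n) {H : (cycleGraph n).Subgraph} {c : Fin n}
    (hmiss : ¬ H.Adj (c - 1) c) :
    ∀ {a b : H.verts} (_ : H.coe.Walk a b) (i : ℕ),
      (a.1 - c).val ≤ i → i < (b.1 - c).val →
      H.Adj (c + (i : Fin n)) (c + ((i+1:ℕ) : Fin n)) := by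
  intro a b W
  induction W with
  | nil => intro i h1 h2; omega
  | @cons u v w h W' ih =>
    intro i h1 h2
    have h' : H.Adj u.1 v.1 := by rwa [Subgraph.coe_adj] at h
    have hcyc := H.adj_sub h'
    rw [cycleGraph_adj'] at hcyc
    rcases hcyc with hax | hxa
    · -- u = v + 1 (down step)
      have hu : u.1 = v.1 + 1 := fin_eq_add_of_sub_val_one hn hax
      by_cases hvc : v.1 + 1 = c
      · exfalso
        apply hmiss
        have hv2 : v.1 = c - 1 := by rw [← hvc]; ring
        rw [← hv2, ← hvc, ← hu]
        exact h'.symm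
      · have hstep : (u.1 - c).val = (v.1 - c).val + 1 := by rw [hu]; exact fin_step hn hvc
        exact ih i (by omega) h2
    · -- v = u + 1 (up step)
      have hv : v.1 = u.1 + 1 := fin_eq_add_of_sub_val_one hn hxa
      by_cases huc : u.1 + 1 = c
      · exfalso
        apply hmiss
        have hu2 : u.1 = c - 1 := by rw [← huc]; ring
        rw [← hu2, ← huc, ← hv]
        exact h'
      · have hstep : (v.1 - c).val = (u.1 - c).val + 1 := by rw [hv]; exact fin_step hn huc
        rcases Nat.eq_or_lt_of_le h1 with heq | hlt
        · have e1 : c + ((i : ℕ) : Fin n) = u.1 := by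
            rw [← heq, Fin.cast_val_eq_self]; ring
          have e2 : c + ((i+1 : ℕ) : Fin n) = v.1 := by
            rw [show i + 1 = (v.1 - c).val by omega, Fin.cast_val_eq_self]; ring
          rw [e1, e2]; exact h'
        · exact ih i (by omega) h2

lemma ncard_ge_of_cover (hn : 2 ≤ n) (H : (cycleGraph n).Subgraph) (c : Fin n)
    (p q : ℕ) (hq : q ≤ n - 1)
    (hsub : ∀ i, p ≤ i → i < q → s(c + (i : Fin n), c + ((i+1:ℕ) : Fin n)) ∈ H.edgeSet) :
    q - p ≤ H.edgeSet.ncard := by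
  have himg : (fun i : ℕ => s(c + (i : Fin n), c + ((i+1:ℕ):Fin n))) '' (Set.Ico p q)
      ⊆ H.edgeSet := by
    rintro e ⟨i, ⟨ha, hb⟩, rfl⟩
    exact hsub i ha hb
  calc q - p = (Set.Ico p q).ncard := by rw [Set.ncard_eq_toFinset_card']; simp
  _ = ((fun i : ℕ => s(c + (i : Fin n), c + ((i+1:ℕ):Fin n))) '' (Set.Ico p q)).ncard :=
      (Set.ncard_image_of_injOn ((edge_injOn hn c).mono
        (fun i hi => lt_of_lt_of_le hi.2 hq))).symm
  _ ≤ H.edgeSet.ncard := Set.ncard_le_ncard himg (Set.toFinite _)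



end fin


lemma fin_filter_val_ge (n t : ℕ) [NeZero n] (ht : t ≤ n) :
    (Finset.univ.filter (fun z : Fin n => t ≤ z.val)).card = n - t := by
  rw [show n - t = (Finset.Ico t n).card by rw [Nat.card_Ico]]
  refine Finset.card_bij' (fun z _ => z.val)
    (fun m hm => (⟨m, (Finset.mem_Ico.mp hm).2⟩ : Fin n)) ?_ ?_ ?_ ?_
  · intro z hz
    simp only [Finset.mem_filter] at hz
    exact Finset.mem_Ico.mpr ⟨hz.2, z.isLt⟩
  · intro m hm
    simp only [Finset.mem_filter, Finset.mem_univ, true_and]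
    exact (Finset.mem_Ico.mp hm).1
  · intro z _; rfl
  · intro m _; rfl

lemma fin_filter_shift (n : ℕ) [NeZero n] (x : Fin n) (t : ℕ) :
    (Finset.univ.filter (fun c : Fin n => t ≤ (x - c).val)).card
    = (Finset.univ.filter (fun z : Fin n => t ≤ z.val)).card := by
  refine Finset.card_bij' (fun c _ => x - c) (fun z _ => x - z) ?_ ?_ ?_ ?_
  · intro c hc
    simp only [Finset.mem_filter, Finset.mem_univ, true_and] at hc ⊢
    exact hc
  · intro z hz
    simp only [Finset.mem_filter, Finset.mem_univ, true_and] at hz ⊢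
    have e : x - (x - z) = z := by ring
    rwa [e]
  · intro c _
    show x - (x - c) = c
    ring
  · intro z _
    show x - (x - z) = z
    ring

lemma pigeonhole (n k d g : ℕ) [NeZero n] (hn : 2 ≤ n) (hk : 2 ≤ k) (hkg : k * g ≤ n + k - 1)
    (hg1 : 1 ≤ g) (hdg : d + g = n) (S : Finset (Fin n)) (hS : S.card = k) :
    ∃ c : Fin n, ∀ x ∈ S, (x - c).val ≤ d := by
  by_contra hcon
  push_neg at hcon
  have key : ∀ c : Fin n, 1 ≤ (S.filter (fun x => d + 1 ≤ (x - c).val)).card := by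
    intro c
    obtain ⟨x, hx, hxd⟩ := hcon c
    exact Finset.card_pos.mpr ⟨x, Finset.mem_filter.mpr ⟨hx, hxd⟩⟩
  have total : ∑ c : Fin n, (S.filter (fun x => d + 1 ≤ (x - c).val)).card
      = ∑ x ∈ S, (Finset.univ.filter (fun c : Fin n => d + 1 ≤ (x - c).val)).card := by
    simp only [Finset.card_filter]
    exact Finset.sum_comm
  have inner : ∀ x : Fin n,
      (Finset.univ.filter (fun c : Fin n => d + 1 ≤ (x - c).val)).card = g - 1 := by
    intro x
    rw [fin_filter_shift, fin_filter_val_ge n (d+1) (by omega)]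
    omega
  have hsum : ∑ x ∈ S, (Finset.univ.filter (fun c : Fin n => d + 1 ≤ (x - c).val)).card
      = k * (g - 1) := by
    rw [Finset.sum_congr rfl (fun x _ => inner x), Finset.sum_const, hS, smul_eq_mul]
  have hn_le : n ≤ k * (g - 1) := by
    calc n = ∑ _c : Fin n, 1 := by simp
    _ ≤ ∑ c : Fin n, (S.filter (fun x => d + 1 ≤ (x - c).val)).card :=
        Finset.sum_le_sum (fun c _ => key c)
    _ = k * (g - 1) := by rw [total, hsum]
  have eg : k * (g - 1) + k = k * g := by
    calc k * (g-1) + k = k * ((g-1) + 1) := by ring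
    _ = k * g := by rw [Nat.sub_add_cancel hg1]
  omega

section spread
variable {n k : ℕ} [NeZero n]

/-- the evenly spread k-subset of the cycle -/
noncomputable def spreadSet (n k : ℕ) [NeZero n] : Finset (Fin n) :=
  (Finset.range k).image (fun j => ((j * n / k : ℕ) : Fin n))

lemma spread_val (hk2 : 2 ≤ k) (hkn : k ≤ n) {j : ℕ} (hj : j < k) :
    (((j * n / k : ℕ) : Fin n)).val = j * n / k := by
  apply Fin.val_cast_of_lt
  have h1 : j * n / k ≤ n * (k-1) / k := nat_spread_le n k j (by omega)
  have h2 : n * (k-1)/k + (n+k-1)/k = n := (nat_d_eq n k hk2 hkn).2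
  have h3 : 0 < (n+k-1)/k := Nat.div_pos (by omega) (by omega)
  omega

lemma spread_card (hk2 : 2 ≤ k) (hkn : k ≤ n) : (spreadSet n k).card = k := by
  rw [spreadSet, Finset.card_image_of_injOn, Finset.card_range]
  intro i hi j hj hij
  simp only [Finset.coe_range, Set.mem_Iio] at hi hj
  have hvi := spread_val hk2 hkn hi
  have hvj := spread_val hk2 hkn hj
  have hij' : ((i * n / k : ℕ) : Fin n) = ((j * n / k : ℕ) : Fin n) := hij
  have hv : i * n / k = j * n / k := by rw [← hvi, ← hvj, hij']
  by_contra hne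
  have mono : ∀ a b : ℕ, a < b → a * n / k + 1 ≤ b * n / k := by
    intro a b hab
    calc a * n / k + 1 ≤ (a+1) * n / k := nat_spread_mono n k a hkn (by omega)
    _ ≤ b * n / k := Nat.div_le_div_right (Nat.mul_le_mul_right n (by omega))
  rcases Nat.lt_or_ge i j with h | h
  · have := mono i j h; omega
  · have := mono j i (by omega); omega

lemma fin_sub_val_cases (x y : Fin n) :
    (y.val ≤ x.val ∧ (x - y).val = x.val - y.val) ∨
      (x.val < y.val ∧ (x - y).val = x.val + n - y.val) := by
  rw [fin_sub_val]
  rcases Nat.lt_or_ge x.val y.val with h | h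
  · right
    rw [if_neg (by omega)]
    omega
  · left
    rw [if_pos h]
    omega

/-- key geometric fact -/
lemma spread_straddle (hk2 : 2 ≤ k) (hkn : k ≤ n) (c : Fin n) :
    ∃ u ∈ spreadSet n k, ∃ w ∈ spreadSet n k,
      (u - c).val + n * (k-1) / k ≤ (w - c).val := by
  have hn2 : 2 ≤ n := by omega
  obtain ⟨hdeq, hdg⟩ := nat_d_eq n k hk2 hkn
  have hg1 : 0 < (n + k - 1) / k := Nat.div_pos (by omega) (by omega)
  have hd_lt : n * (k-1) / k ≤ n - 1 := by omega
  have hmlt : c.val < n := c.isLt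
  have memf : ∀ j, j < k → ((j * n / k : ℕ) : Fin n) ∈ spreadSet n k := by
    intro j hj
    exact Finset.mem_image.mpr ⟨j, Finset.mem_range.mpr hj, rfl⟩
  have h0val : 0 * n / k = 0 := by simp
  have hkd : (k-1) * n / k = n * (k-1) / k := by rw [Nat.mul_comm]
  rcases Nat.eq_zero_or_pos c.val with hm0 | hm1
  · -- c = 0 : take u = f 0 = 0, w = f (k-1)
    refine ⟨_, memf 0 (by omega), _, memf (k-1) (by omega), ?_⟩
    have hv0 : (((0 * n / k : ℕ) : Fin n)).val = 0 * n / k := spread_val hk2 hkn (by omega)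
    have hvw : ((((k-1) * n / k : ℕ) : Fin n)).val = (k-1) * n / k := spread_val hk2 hkn (by omega)
    rcases fin_sub_val_cases (((0 * n / k : ℕ) : Fin n)) c with ⟨h1, e1⟩ | ⟨h1, e1⟩ <;>
      rcases fin_sub_val_cases ((((k-1) * n / k : ℕ) : Fin n)) c with ⟨h2, e2⟩ | ⟨h2, e2⟩ <;>
      omega
  · -- c.val ≥ 1
    classical
    have hP0 : 0 * n / k ≤ c.val - 1 := by omega
    set j := Nat.findGreatest (fun j => j * n / k ≤ c.val - 1) (k-1) with hj
    have hPj : j * n / k ≤ c.val - 1 :=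
      Nat.findGreatest_spec (P := fun j => j * n / k ≤ c.val - 1) (m := 0) (by omega) hP0
    have hjk : j ≤ k - 1 := Nat.findGreatest_le (k-1)
    have hwval : (((j * n / k : ℕ) : Fin n)).val = j * n / k := spread_val hk2 hkn (by omega)
    have hwd : j * n / k ≤ n * (k-1) / k := nat_spread_le n k j hjk
    rcases Nat.lt_or_ge j (k-1) with hjlt | hjge
    · -- u = f (j+1)
      have hnP : ¬ ((j+1) * n / k ≤ c.val - 1) := by
        have h := Nat.findGreatest_is_greatest (P := fun j => j * n / k ≤ c.val - 1)
          (n := k - 1) (k := j + 1) (by omega) (by omega)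
        simpa using h
      have huval : ((((j+1) * n / k : ℕ) : Fin n)).val = (j+1) * n / k :=
        spread_val hk2 hkn (by omega)
      have hud : (j+1) * n / k ≤ n * (k-1) / k := nat_spread_le n k (j+1) (by omega)
      refine ⟨_, memf (j+1) (by omega), _, memf j (by omega), ?_⟩
      have hgap : (j+1) * n / k ≤ j * n / k + (n + k - 1) / k := nat_gap n k j (by omega)
      rcases fin_sub_val_cases ((((j+1) * n / k : ℕ) : Fin n)) c with ⟨h1, e1⟩ | ⟨h1, e1⟩ <;>
        rcases fin_sub_val_cases (((j * n / k : ℕ) : Fin n)) c with ⟨h2, e2⟩ | ⟨h2, e2⟩ <;>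
        omega
    · -- j = k - 1 : u = f 0
      have hjeq : j = k - 1 := by omega
      refine ⟨_, memf 0 (by omega), _, memf j (by omega), ?_⟩
      have hv0 : (((0 * n / k : ℕ) : Fin n)).val = 0 * n / k := spread_val hk2 hkn (by omega)
      have hwde : j * n / k = n * (k-1) / k := by rw [hjeq, Nat.mul_comm]
      rcases fin_sub_val_cases (((0 * n / k : ℕ) : Fin n)) c with ⟨h1, e1⟩ | ⟨h1, e1⟩ <;>
        rcases fin_sub_val_cases (((j * n / k : ℕ) : Fin n)) c with ⟨h2, e2⟩ | ⟨h2, e2⟩ <;>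
        omega

end spread

end helpers

open Fin.CommRing Fin.NatCast

theorem stmt5 (n k : ℕ) (hk2 : 2 ≤ k) (hkn : k ≤ n) :
    sdiam (SimpleGraph.cycleGraph n) k = n * (k - 1) / k := by
  have hn2 : 2 ≤ n := by omega
  haveI : NeZero n := ⟨by omega⟩
  obtain ⟨hdeq, hdg⟩ := nat_d_eq n k hk2 hkn
  have hg1 : 0 < (n+k-1)/k := Nat.div_pos (by omega) (by omega)
  have hd_le : n*(k-1)/k ≤ n - 1 := by omega
  have upper : ∀ S : Finset (Fin n), S.card = k →
      steinerDist (SimpleGraph.cycleGraph n) ↑S ≤ n*(k-1)/k := by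
    intro S hS
    have hkg : k * ((n+k-1)/k) ≤ n + k - 1 := (nat_g_facts n k (by omega)).2
    obtain ⟨c, hc⟩ := pigeonhole n k (n*(k-1)/k) ((n+k-1)/k) hn2 hk2 hkg
      (by omega) (by omega) S hS
    rw [steinerDist]
    apply Nat.sInf_le
    refine ⟨arcSub n hn2 c (n*(k-1)/k) hd_le, arcSub_connected hn2 c _ hd_le, ?_,
      arcSub_ncard hn2 c _ hd_le⟩
    intro x hx
    exact arcSub_verts hn2 c _ hd_le x (hc x (Finset.mem_coe.mp hx))
  have lower : ∀ m, (∃ H : (cycleGraph n).Subgraph, H.Connected ∧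
      ↑(spreadSet n k) ⊆ H.verts ∧ H.edgeSet.ncard = m) → n*(k-1)/k ≤ m := by
    rintro m ⟨H, hconn, hsub, rfl⟩
    by_cases hall : ∀ x : Fin n, H.Adj (x - 1) x
    · have cover : ∀ i, 0 ≤ i → i < n - 1 →
          s((0:Fin n) + (i : Fin n), (0:Fin n) + ((i+1:ℕ) : Fin n)) ∈ H.edgeSet := by
        intro i _ hi
        rw [Subgraph.mem_edgeSet]
        have e : (0:Fin n) + ((i+1:ℕ) : Fin n) - 1 = (0:Fin n) + (i : Fin n) := by
          push_cast; ring
        have h := hall ((0:Fin n) + ((i+1:ℕ) : Fin n))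
        rwa [e] at h
      have hcount := ncard_ge_of_cover hn2 H 0 0 (n-1) le_rfl cover
      omega
    · push_neg at hall
      obtain ⟨c, hmiss⟩ := hall
      obtain ⟨u, hu, w, hw, hstrad⟩ := spread_straddle hk2 hkn c
      have huv : u ∈ H.verts := hsub (Finset.mem_coe.mpr hu)
      have hwv : w ∈ H.verts := hsub (Finset.mem_coe.mpr hw)
      obtain ⟨W⟩ := hconn.coe.preconnected ⟨u, huv⟩ ⟨w, hwv⟩
      have cover : ∀ i, (u - c).val ≤ i → i < (w - c).val →
          s(c + (i:Fin n), c + ((i+1:ℕ):Fin n)) ∈ H.edgeSet := by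
        intro i h1 h2
        rw [Subgraph.mem_edgeSet]
        exact walk_edge_cover hn2 hmiss W i h1 h2
      have hcount := ncard_ge_of_cover hn2 H c ((u-c).val) ((w-c).val)
        (by have := (w-c).isLt; omega) cover
      omega
  have hne : ∃ m, ∃ H : (cycleGraph n).Subgraph, H.Connected ∧
      ↑(spreadSet n k) ⊆ H.verts ∧ H.edgeSet.ncard = m := by
    have hkg : k * ((n+k-1)/k) ≤ n + k - 1 := (nat_g_facts n k (by omega)).2
    obtain ⟨c, hc⟩ := pigeonhole n k (n*(k-1)/k) ((n+k-1)/k) hn2 hk2 hkg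
      (by omega) (by omega) (spreadSet n k) (spread_card hk2 hkn)
    exact ⟨(arcSub n hn2 c (n*(k-1)/k) hd_le).edgeSet.ncard,
      arcSub n hn2 c (n*(k-1)/k) hd_le, arcSub_connected hn2 c _ hd_le,
      fun x hx => arcSub_verts hn2 c _ hd_le x (hc x (Finset.mem_coe.mp hx)), rfl⟩
  have hspmem : steinerDist (SimpleGraph.cycleGraph n) ↑(spreadSet n k) = n*(k-1)/k := by
    apply le_antisymm (upper _ (spread_card hk2 hkn))
    rw [steinerDist]
    apply le_csInf
    · obtain ⟨m, hm⟩ := hne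
      exact ⟨m, hm⟩
    · rintro m hm
      exact lower m hm
  rw [sdiam]
  apply le_antisymm
  · refine csSup_le ⟨n*(k-1)/k, ?_⟩ ?_
    · exact ⟨spreadSet n k, spread_card hk2 hkn, hspmem⟩
    · rintro m ⟨S, hS, rfl⟩
      exact upper S hS
  · apply le_csSup
    · refine ⟨n*(k-1)/k, ?_⟩
      rintro m ⟨S, hS, rfl⟩
      exact upper S hS
    · exact ⟨spreadSet n k, spread_card hk2 hkn, hspmem⟩
end

section
/- Let T be a tree of order n with exactly r leaves. If r ≥ 4, then sdiam_3(T) ≤ n − r + 2. -/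
open SimpleGraph

open SimpleGraph

/-- Internal vertices of a path in any graph have at least 2 neighbors; hence
a vertex of degree 1 on a path is an endpoint. -/
lemma leaf_on_path {V : Type*} {T : SimpleGraph V} {a b : V} (p : T.Walk a b)
    (hp : p.IsPath) {v : V} (hv : v ∈ p.support)
    (hleaf : (T.neighborSet v).ncard = 1) (hfin : (T.neighborSet v).Finite) :
    v = a ∨ v = b := by
  induction p with
  | nil => simp_all
  | @cons a w b h q IH =>
    rw [Walk.support_cons, List.mem_cons] at hv
    rcases hv with rfl | hv
    · exact Or.inl rfl
    rcases IH hp.of_cons hv with rfl | rfl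
    · -- v = w : show w = b, else contradiction with degree 1
      by_cases hq : q.length = 0
      · right
        have := q.getVert_length
        rw [hq] at this
        simpa using this
      · exfalso
        have hlt : 0 < q.length := Nat.pos_of_ne_zero hq
        have hadj1 : T.Adj v a := h.symm
        have hadj2 : T.Adj v (q.getVert 1) := by
          simpa using q.adj_getVert_succ hlt
        have hmem : q.getVert 1 ∈ q.support :=
          Walk.mem_support_iff_exists_getVert.mpr ⟨1, rfl, hlt⟩
        have hane : a ≠ q.getVert 1 := by
          rintro rfl
          exact ((Walk.cons_isPath_iff h q).mp hp).2 hmem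
        have h2 : 1 < (T.neighborSet v).ncard := by
          rw [Set.one_lt_ncard hfin]
          exact ⟨a, hadj1, q.getVert 1, hadj2, hane⟩
        omega
    · exact Or.inr rfl

lemma subgraph_coe_acyclic {V : Type*} {T : SimpleGraph V} (hac : T.IsAcyclic)
    (H : T.Subgraph) : H.coe.IsAcyclic := by
  intro v c hc
  exact hac (c.map H.hom) (hc.map Subgraph.hom_injective)

theorem stmt6 {V : Type*} [Fintype V] (T : SimpleGraph V)
    (hconn : T.Connected) (hac : T.IsAcyclic)
    (n r : ℕ) (hn : Fintype.card V = n)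
    (hr : {v : V | (T.neighborSet v).ncard = 1}.ncard = r) (hr4 : 4 ≤ r) :
    sdiam T 3 ≤ n - r + 2 := by
  classical
  rw [sdiam]
  apply csSup_le'
  rintro m ⟨S, hS3, rfl⟩
  obtain ⟨a, b, c, hab, hac', hbc, rfl⟩ := Finset.card_eq_three.mp hS3
  -- build the Steiner tree from two paths
  have wab : T.Walk a b := (hconn.preconnected a b).some
  have wbc : T.Walk b c := (hconn.preconnected b c).some
  set p : T.Path a b := wab.toPath with hp
  set q : T.Path b c := wbc.toPath with hq
  set H : T.Subgraph := p.val.toSubgraph ⊔ q.val.toSubgraph with hH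
  have hHconn : H.Connected := by
    refine Subgraph.connected_sup p.val.toSubgraph_connected.preconnected
      q.val.toSubgraph_connected.preconnected ⟨b, ?_, ?_⟩
    · exact p.val.end_mem_verts_toSubgraph
    · exact q.val.start_mem_verts_toSubgraph
  have hsub : ↑({a, b, c} : Finset V) ⊆ H.verts := by
    intro x hx
    simp only [Finset.coe_insert, Finset.coe_singleton, Set.mem_insert_iff,
      Set.mem_singleton_iff] at hx
    rcases hx with rfl | rfl | rfl
    · exact Or.inl p.val.start_mem_verts_toSubgraph
    · exact Or.inl p.val.end_mem_verts_toSubgraph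
    · exact Or.inr q.val.end_mem_verts_toSubgraph
  -- vertex bound
  set L : Set V := {v : V | (T.neighborSet v).ncard = 1} with hL
  have hvsub : H.verts ⊆ Lᶜ ∪ {a, b, c} := by
    intro v hv
    by_cases hvl : v ∈ L
    · right
      rcases hv with hv | hv
      · rw [Walk.mem_verts_toSubgraph] at hv
        rcases leaf_on_path _ p.2 hv hvl (Set.toFinite _) with rfl | rfl <;> simp
      · rw [Walk.mem_verts_toSubgraph] at hv
        rcases leaf_on_path _ q.2 hv hvl (Set.toFinite _) with rfl | rfl <;> simp
    · exact Or.inl hvl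
  have hcompl : Lᶜ.ncard = n - r := by
    have := Set.ncard_add_ncard_compl L (Set.toFinite _) (Set.toFinite _)
    rw [hr, Nat.card_eq_fintype_card, hn] at this
    omega
  have habc : ({a, b, c} : Set V).ncard ≤ 3 := by
    refine le_trans (Set.ncard_insert_le _ _) ?_
    have := Set.ncard_insert_le b ({c} : Set V)
    simp only [Set.ncard_singleton] at this ⊢
    omega
  have hvcard : H.verts.ncard ≤ n - r + 3 := by
    calc H.verts.ncard ≤ (Lᶜ ∪ {a, b, c}).ncard :=
          Set.ncard_le_ncard hvsub (Set.toFinite _)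
      _ ≤ Lᶜ.ncard + ({a, b, c} : Set V).ncard := Set.ncard_union_le _ _
      _ ≤ n - r + 3 := by omega
  -- edge count of the subgraph tree
  have htree : H.coe.IsTree :=
    ⟨Subgraph.connected_iff'.mp hHconn, subgraph_coe_acyclic hac H⟩
  have hcard : H.coe.edgeFinset.card + 1 = Fintype.card H.verts := htree.card_edgeFinset
  have hedge : H.edgeSet.ncard = H.coe.edgeFinset.card := by
    rw [← H.image_coe_edgeSet_coe]
    rw [Set.ncard_image_of_injective _ (Sym2.map.injective Subtype.val_injective)]
    rw [Set.ncard_eq_toFinset_card', Set.toFinset_card]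
    rw [SimpleGraph.edgeFinset_card]
  have hvc : Fintype.card H.verts = H.verts.ncard := by
    rw [Set.ncard_eq_toFinset_card', Set.toFinset_card]
  have hbound : H.edgeSet.ncard ≤ n - r + 2 := by
    rw [hedge]
    omega
  rw [steinerDist]
  exact le_trans (Nat.sInf_le ⟨H, hHconn, hsub, rfl⟩) hbound
end

section
/- Let G be a connected graph of order n ≥ 3. Then sdiam_3(G) = 2 if and only if n − 2 ≤ δ(G) ≤ n − 1, i.e., the minimum degree of G is at least n − 2. -/
open SimpleGraph

section StmtSevenHelpers

variable {V : Type*}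

private lemma walk_exists_adj' {W : Type*} {G' : SimpleGraph W} {a b : W} (p : G'.Walk a b)
    (h : a ≠ b) : ∃ w, G'.Adj a w := by
  cases p with
  | nil => exact absurd rfl h
  | cons h' _ => exact ⟨_, h'⟩

private lemma exists_nbr' {G : SimpleGraph V} {H : G.Subgraph} (hH : H.Connected)
    {u u' : V} (hu : u ∈ H.verts) (hu' : u' ∈ H.verts) (hne : u ≠ u') :
    ∃ w, H.Adj u w := by
  obtain ⟨p⟩ := hH.coe ⟨u, hu⟩ ⟨u', hu'⟩
  obtain ⟨w, hw⟩ := walk_exists_adj' p (by simpa [Subtype.ext_iff] using hne)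
  exact ⟨↑w, hw⟩

private lemma walk_mem_closed' {W : Type*} {G' : SimpleGraph W} {s : Set W}
    (hs : ∀ a ∈ s, ∀ b, G'.Adj a b → b ∈ s)
    {a b : W} (p : G'.Walk a b) (hb : b ∈ s) : a ∈ s := by
  induction p with
  | nil => exact hb
  | cons h q ih => exact hs _ (ih hb) _ h.symm

private lemma two_le_of_mem' {α : Type*} [Finite α] {s : Set α} {e1 e2 : α}
    (h1 : e1 ∈ s) (h2 : e2 ∈ s) (d : e1 ≠ e2) : 2 ≤ s.ncard :=
  (Set.one_lt_ncard s.toFinite).2 ⟨e1, h1, e2, h2, d⟩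

private lemma three_le_of_mem' {α : Type*} [Finite α] {s : Set α} {e1 e2 e3 : α}
    (h1 : e1 ∈ s) (h2 : e2 ∈ s) (h3 : e3 ∈ s)
    (d12 : e1 ≠ e2) (d13 : e1 ≠ e3) (d23 : e2 ≠ e3) : 3 ≤ s.ncard := by
  have hsub : ({e1, e2, e3} : Set α) ⊆ s := by
    intro e he; rcases he with rfl | rfl | rfl <;> assumption
  have h3' : ({e1, e2, e3} : Set α).ncard = 3 := by
    rw [Set.ncard_insert_of_notMem (by simp [d12, d13]), Set.ncard_pair d23]
  calc 3 = ({e1, e2, e3} : Set α).ncard := h3'.symm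
    _ ≤ s.ncard := Set.ncard_le_ncard hsub s.toFinite

private lemma sym2_ne' {a b c d : V} (h1 : c ≠ a) (h2 : c ≠ b) : s(a, b) ≠ s(c, d) := by
  intro h
  have : c ∈ (s(a, b) : Sym2 V) := h ▸ Sym2.mem_mk_left c d
  rcases Sym2.mem_iff.1 this with h | h
  exacts [h1 h, h2 h]

/-- A connected subgraph containing three distinct vertices has at least two edges. -/
private lemma two_le_edges' [Finite V] {G : SimpleGraph V} {H : G.Subgraph} (hH : H.Connected)
    {a b c : V} (ha : a ∈ H.verts) (hb : b ∈ H.verts) (hc : c ∈ H.verts)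
    (hab : a ≠ b) (hac : a ≠ c) (hbc : b ≠ c) : 2 ≤ H.edgeSet.ncard := by
  obtain ⟨w, hw⟩ := exists_nbr' hH ha hb hab
  obtain ⟨t, ht, htw, hta⟩ : ∃ t, t ∈ H.verts ∧ t ≠ w ∧ t ≠ a := by
    by_cases h : b = w
    · exact ⟨c, hc, fun hh => hbc (h.trans hh.symm), hac.symm⟩
    · exact ⟨b, hb, h, hab.symm⟩
  obtain ⟨z, hz⟩ := exists_nbr' hH ht ha hta
  exact two_le_of_mem' (Subgraph.mem_edgeSet.2 hw) (Subgraph.mem_edgeSet.2 hz)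
    (sym2_ne' hta htw)

/-- If `v` is adjacent (in `G`) to neither `x` nor `y`, any connected subgraph containing
all three has at least three edges. -/
private lemma three_le_edges' [Finite V] {G : SimpleGraph V} {H : G.Subgraph}
    (hH : H.Connected)
    {v x y : V} (hv : v ∈ H.verts) (hx : x ∈ H.verts) (hy : y ∈ H.verts)
    (hvx : v ≠ x) (hvy : v ≠ y) (hxy : x ≠ y)
    (hnx : ¬ G.Adj v x) (hny : ¬ G.Adj v y) : 3 ≤ H.edgeSet.ncard := by
  obtain ⟨w, hw⟩ := exists_nbr' hH hv hx hvx
  have hxw : x ≠ w := fun h => hnx (h ▸ H.adj_sub hw)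
  have hyw : y ≠ w := fun h => hny (h ▸ H.adj_sub hw)
  by_cases hcase : (∃ z, H.Adj x z ∧ z ≠ y) ∨ (∃ z, H.Adj y z ∧ z ≠ x)
  · rcases hcase with ⟨z, hz, hzy⟩ | ⟨z, hz, hzx⟩
    · obtain ⟨u, hu⟩ := exists_nbr' hH hy hv hvy.symm
      exact three_le_of_mem' (Subgraph.mem_edgeSet.2 hw) (Subgraph.mem_edgeSet.2 hz)
        (Subgraph.mem_edgeSet.2 hu) (sym2_ne' hvx.symm hxw)
        (sym2_ne' hvy.symm hyw) (sym2_ne' hxy.symm (Ne.symm hzy))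
    · obtain ⟨u, hu⟩ := exists_nbr' hH hx hv hvx.symm
      exact three_le_of_mem' (Subgraph.mem_edgeSet.2 hw) (Subgraph.mem_edgeSet.2 hz)
        (Subgraph.mem_edgeSet.2 hu) (sym2_ne' hvy.symm hyw)
        (sym2_ne' hvx.symm hxw) (sym2_ne' hxy (Ne.symm hzx))
  · push_neg at hcase
    obtain ⟨h1, h2⟩ := hcase
    have hclosed : ∀ a ∈ {u : H.verts | (u : V) = x ∨ (u : V) = y}, ∀ b,
        H.coe.Adj a b → b ∈ {u : H.verts | (u : V) = x ∨ (u : V) = y} := by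
      rintro a (hax | hay) b hab
      · exact Or.inr (h1 _ (by rw [← hax]; exact hab))
      · exact Or.inl (h2 _ (by rw [← hay]; exact hab))
    obtain ⟨p⟩ := hH.coe ⟨v, hv⟩ ⟨x, hx⟩
    rcases walk_mem_closed' hclosed p (Or.inl rfl) with h | h
    · exact absurd h hvx
    · exact absurd h hvy

private lemma sdp_nonempty' [Fintype V] {G : SimpleGraph V} (hG : G.Connected) (S : Set V) :
    {m : ℕ | ∃ H : G.Subgraph, H.Connected ∧ S ⊆ H.verts ∧ H.edgeSet.ncard = m}.Nonempty := by
  have htop : (⊤ : G.Subgraph).Connected := ⟨Subgraph.topIso.connected_iff.mpr hG⟩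
  exact ⟨G.edgeSet.ncard, ⊤, htop, by simp [Subgraph.verts_top], by rw [Subgraph.edgeSet_top]⟩

private lemma steiner_le_two' [Fintype V] {G : SimpleGraph V} {x y z : V}
    (hxy : G.Adj x y) (hxz : G.Adj x z) (hyz : y ≠ z) (Sset : Set V)
    (hSsub : Sset ⊆ {x, y, z}) : steinerDist G Sset ≤ 2 := by
  refine Nat.sInf_le ⟨G.subgraphOfAdj hxy ⊔ G.subgraphOfAdj hxz, ?_, ?_, ?_⟩
  · exact Subgraph.connected_sup (Subgraph.subgraphOfAdj_connected hxy).preconnected (Subgraph.subgraphOfAdj_connected hxz).preconnected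
      ⟨x, by simp⟩
  · refine hSsub.trans ?_
    intro u hu
    rcases hu with rfl | rfl | rfl <;> simp
  · rw [Subgraph.edgeSet_sup, G.edgeSet_subgraphOfAdj, G.edgeSet_subgraphOfAdj,
      Set.singleton_union, Set.ncard_pair]
    intro h
    rcases Sym2.eq_iff.1 h with ⟨-, h⟩ | ⟨h1, h2⟩
    · exact hyz h
    · exact hxz.ne h1

end StmtSevenHelpers

theorem stmt7 {V : Type*} [Fintype V] (G : SimpleGraph V) (hG : G.Connected)
    (hn : 3 ≤ Fintype.card V) :
    sdiam G 3 = 2 ↔ Fintype.card V - 2 ≤ minDeg G := by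
  classical
  set n := Fintype.card V with hncard
  have degmem : ∀ v : V, minDeg G ≤ (G.neighborSet v).ncard :=
    fun v => Nat.sInf_le ⟨v, rfl⟩
  have degsum : ∀ v : V, (G.neighborSet v).ncard + (G.neighborSet v)ᶜ.ncard = n := by
    intro v
    rw [Set.ncard_add_ncard_compl, Nat.card_eq_fintype_card]
  -- boundedness of the sdiam index set
  have hbdd : BddAbove {m : ℕ | ∃ S : Finset V, S.card = 3 ∧ steinerDist G ↑S = m} := by
    refine ⟨G.edgeSet.ncard, ?_⟩
    rintro m ⟨S, -, rfl⟩
    exact Nat.sInf_le ⟨⊤, ⟨Subgraph.topIso.connected_iff.mpr hG⟩,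
      by simp [Subgraph.verts_top], by rw [Subgraph.edgeSet_top]⟩
  constructor
  · -- sdiam = 2 → n - 2 ≤ minDeg
    intro hsd
    by_contra hlt
    push_neg at hlt
    have hV : Nonempty V := Fintype.card_pos_iff.mp (by omega)
    obtain ⟨v, hv⟩ : ∃ v : V, (G.neighborSet v).ncard = minDeg G := by
      have := Nat.sInf_mem (s := {d : ℕ | ∃ v : V, (G.neighborSet v).ncard = d})
        ⟨_, Classical.arbitrary V, rfl⟩
      exact this
    have hA : 2 ≤ ((insert v (G.neighborSet v))ᶜ : Set V).ncard := by
      have h1 : (insert v (G.neighborSet v)).ncard ≤ (G.neighborSet v).ncard + 1 :=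
        Set.ncard_insert_le _ _
      have h2 : (insert v (G.neighborSet v)).ncard
          + ((insert v (G.neighborSet v))ᶜ : Set V).ncard = n := by
        rw [Set.ncard_add_ncard_compl, Nat.card_eq_fintype_card]
      omega
    obtain ⟨x, hxA, y, hyA, hxy⟩ :=
      (Set.one_lt_ncard (s := ((insert v (G.neighborSet v))ᶜ : Set V))
        (Set.toFinite _)).1 (by omega)
    simp only [Set.mem_compl_iff, Set.mem_insert_iff, SimpleGraph.mem_neighborSet,
      not_or] at hxA hyA
    obtain ⟨hxv, hxadj⟩ := hxA
    obtain ⟨hyv, hyadj⟩ := hyA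
    set S : Finset V := {v, x, y} with hS
    have hScard : S.card = 3 :=
      Finset.card_eq_three.2 ⟨v, x, y, fun h => hxv h.symm, fun h => hyv h.symm, hxy, rfl⟩
    have h3 : 3 ≤ steinerDist G ↑S := by
      obtain ⟨H, hc, hsub, hcard⟩ := Nat.sInf_mem (sdp_nonempty' hG (↑S : Set V))
      rw [steinerDist, ← hcard]
      exact three_le_edges' hc (hsub (by simp [hS])) (hsub (by simp [hS]))
        (hsub (by simp [hS])) (fun h => hxv h.symm) (fun h => hyv h.symm) hxy
        hxadj hyadj
    have hle : steinerDist G ↑S ≤ sdiam G 3 := le_csSup hbdd ⟨S, hScard, rfl⟩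
    rw [hsd] at hle
    omega
  · -- n - 2 ≤ minDeg → sdiam = 2
    intro hmin
    have adjOr : ∀ v p q : V, p ≠ q → v ≠ p → v ≠ q → G.Adj v p ∨ G.Adj v q := by
      intro v p q hpq hvp hvq
      by_contra hcon
      push_neg at hcon
      obtain ⟨hp, hq⟩ := hcon
      have hsub : ({v, p, q} : Set V) ⊆ (G.neighborSet v)ᶜ := by
        rintro u (rfl | rfl | rfl) <;>
          simp only [Set.mem_compl_iff, SimpleGraph.mem_neighborSet]
        · exact fun h => G.irrefl h
        · exact hp
        · exact hq
      have h3c : 3 ≤ ((G.neighborSet v)ᶜ : Set V).ncard := by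
        have hc3 : ({v, p, q} : Set V).ncard = 3 := by
          rw [Set.ncard_insert_of_notMem (by simp [hvp, hvq]), Set.ncard_pair hpq]
        calc 3 = ({v, p, q} : Set V).ncard := hc3.symm
          _ ≤ _ := Set.ncard_le_ncard hsub (Set.toFinite _)
      have := degmem v
      have := degsum v
      omega
    have key : ∀ S : Finset V, S.card = 3 → steinerDist G ↑S = 2 := by
      intro S hScard
      obtain ⟨a, b, c, hab, hac, hbc, rfl⟩ := Finset.card_eq_three.1 hScard
      have hcoe : (↑({a, b, c} : Finset V) : Set V) = {a, b, c} := by simp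
      have hlow : 2 ≤ steinerDist G ↑({a, b, c} : Finset V) := by
        obtain ⟨H, hc, hsub, hcard⟩ := Nat.sInf_mem (sdp_nonempty' hG _)
        rw [steinerDist, ← hcard]
        exact two_le_edges' hc (hsub (by simp)) (hsub (by simp)) (hsub (by simp))
          hab hac hbc
      have hup : steinerDist G ↑({a, b, c} : Finset V) ≤ 2 := by
        rw [hcoe]
        by_cases hab' : G.Adj a b
        · by_cases hac' : G.Adj a c
          · exact steiner_le_two' hab' hac' hbc _ (by intro u hu; exact hu)
          · have hbc' : G.Adj b c := by
              rcases adjOr c a b hab hac.symm hbc.symm with h | h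
              · exact absurd h.symm hac'
              · exact h.symm
            refine steiner_le_two' hab'.symm hbc' hac _ ?_
            rintro u (rfl | rfl | rfl) <;> simp
        · have hac' : G.Adj a c := (adjOr a b c hbc hab hac).resolve_left hab'
          have hbc' : G.Adj b c := by
            rcases adjOr b a c hac hab.symm hbc with h | h
            · exact absurd h.symm hab'
            · exact h
          refine steiner_le_two' hac'.symm hbc'.symm hab _ ?_
          rintro u (rfl | rfl | rfl) <;> simp
      omega
    have hTeq : {m : ℕ | ∃ S : Finset V, S.card = 3 ∧ steinerDist G ↑S = m} = {2} := by
      ext m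
      simp only [Set.mem_setOf_eq, Set.mem_singleton_iff]
      constructor
      · rintro ⟨S, hS3, rfl⟩
        exact key S hS3
      · rintro rfl
        obtain ⟨S, -, hS3⟩ := Finset.exists_subset_card_eq (s := (Finset.univ : Finset V)) (n := 3)
          (by simpa using hn)
        exact ⟨S, hS3, key S hS3⟩
    rw [sdiam, hTeq]
    exact csSup_singleton 2
end

section
/- Let T be a tree of order n ≥ 5. Then sdiam_3(T) = 3 if and only if T is a star K_{1,n−1}. -/
open SimpleGraph

private lemma top_conn {V : Type*} {G : SimpleGraph V} (h : G.Connected) :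
    (⊤ : G.Subgraph).Connected := by
  rw [Subgraph.connected_iff_forall_exists_walk_subgraph]
  refine ⟨⟨h.nonempty.some, trivial⟩, fun {u v} _ _ => ?_⟩
  obtain ⟨p⟩ := h.preconnected u v
  exact ⟨p, le_top⟩

private lemma walk_edges_mem {V : Type*} {G : SimpleGraph V} {H : G.Subgraph}
    (hH : H.Connected) {u v : V} (hu : u ∈ H.verts) (hv : v ∈ H.verts) :
    ∃ p : G.Walk u v, ∀ e ∈ p.edges, e ∈ H.edgeSet := by
  obtain ⟨p, hp⟩ :=
    (Subgraph.preconnected_iff_forall_exists_walk_subgraph H).mp hH.preconnected hu hv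
  exact ⟨p, fun e he => Subgraph.edgeSet_mono hp ((Walk.mem_edges_toSubgraph p).mpr he)⟩

private lemma path_edges_mem {V : Type*} [DecidableEq V] {G : SimpleGraph V}
    (hac : G.IsAcyclic) {H : G.Subgraph}
    (hH : H.Connected) {u v : V} (hu : u ∈ H.verts) (hv : v ∈ H.verts)
    {p : G.Walk u v} (hp : p.IsPath) : ∀ e ∈ p.edges, e ∈ H.edgeSet := by
  obtain ⟨w, hw⟩ := walk_edges_mem hH hu hv
  have heq : p = w.bypass :=
    congrArg Subtype.val (hac.path_unique ⟨p, hp⟩ ⟨w.bypass, w.bypass_isPath⟩)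
  intro e he
  exact hw e (w.edges_bypass_subset (heq ▸ he))

private lemma star_of_hyp {V : Type*} [DecidableEq V] {T : SimpleGraph V} (hconn : T.Connected)
    {a0 b0 : V} (hab0 : T.Adj a0 b0)
    (hyp : ∀ a b, T.Adj a b → (∀ u, T.Adj a u → u = b) ∨ (∀ u, T.Adj b u → u = a)) :
    ∃ c : V, ∀ v : V, v ≠ c → T.Adj c v := by
  obtain ⟨c, b, hcb, hb⟩ : ∃ c b, T.Adj c b ∧ ∀ u, T.Adj b u → u = c := by
    rcases hyp a0 b0 hab0 with h | h
    · exact ⟨b0, a0, hab0.symm, h⟩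
    · exact ⟨a0, b0, hab0, h⟩
  refine ⟨c, fun v hv => ?_⟩
  suffices h : ∀ (p : T.Walk v c), p.IsPath → T.Adj c v by
    obtain ⟨q⟩ := hconn.preconnected v c
    exact h q.bypass q.bypass_isPath
  intro p hp
  cases p with
  | nil => exact absurd rfl hv
  | cons h q =>
    rename_i w
    cases q with
    | nil => exact h.symm
    | cons h' q' =>
      rename_i x
      rw [Walk.cons_isPath_iff] at hp
      obtain ⟨hp1, hvmem⟩ := hp
      rw [Walk.cons_isPath_iff] at hp1
      obtain ⟨hp2, hwmem⟩ := hp1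
      have hvx : v ≠ x := by
        intro e
        subst e
        exact hvmem (by rw [Walk.support_cons]; exact List.mem_cons_of_mem _ q'.start_mem_support)
      cases q' with
      | nil =>
        rcases hyp w c h' with hl | hr
        · exact absurd (hl v h.symm) hv
        · have hbw : b = w := hr b hcb
          exact absurd (hb v (hbw ▸ h.symm)) hv
      | cons h'' q'' =>
        rename_i y
        rcases hyp w x h' with hl | hr
        · exact absurd (hl v h.symm) hvx
        · have hyw : y = w := hr y h''
          subst hyw
          exact absurd (List.mem_cons_of_mem _ q''.start_mem_support) hwmem

theorem stmt10 {V : Type*} [Fintype V] (T : SimpleGraph V)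
    (hconn : T.Connected) (hac : T.IsAcyclic) (hn : 5 ≤ Fintype.card V) :
    sdiam T 3 = 3 ↔ ∃ c : V, ∀ v : V, v ≠ c → T.Adj c v := by
  classical
  have htop : (⊤ : T.Subgraph).Connected := top_conn hconn
  have hSDle : ∀ S : Set V, steinerDist T S ≤ T.edgeSet.ncard := fun S =>
    Nat.sInf_le ⟨⊤, htop, by simp [Subgraph.verts_top], rfl⟩
  have hbdd : BddAbove {m : ℕ | ∃ S : Finset V, S.card = 3 ∧ steinerDist T ↑S = m} := by
    refine ⟨T.edgeSet.ncard, ?_⟩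
    rintro m ⟨S, -, rfl⟩
    exact hSDle ↑S
  have hne_set : ∀ S : Set V,
      {m : ℕ | ∃ H : T.Subgraph, H.Connected ∧ S ⊆ H.verts ∧ H.edgeSet.ncard = m}.Nonempty :=
    fun S => ⟨(⊤ : T.Subgraph).edgeSet.ncard, ⊤, htop, by simp [Subgraph.verts_top], rfl⟩
  constructor
  · intro h3
    by_contra hnostar
    obtain ⟨a0, b0, hab0⟩ : ∃ a b, T.Adj a b := by
      obtain ⟨x, y, hxy⟩ := Fintype.exists_pair_of_one_lt_card (α := V) (by omega)
      obtain ⟨p⟩ := hconn.preconnected x y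
      cases p with
      | nil => exact absurd rfl hxy
      | cons h q => exact ⟨_, _, h⟩
    have hyp_false : ¬ ∀ a b, T.Adj a b →
        (∀ u, T.Adj a u → u = b) ∨ (∀ u, T.Adj b u → u = a) :=
      fun hyp => hnostar (star_of_hyp hconn hab0 hyp)
    push_neg at hyp_false
    obtain ⟨a, b, hab, ⟨u, hau, hub⟩, ⟨v, hbv, hva⟩⟩ := hyp_false
    have hua : u ≠ a := hau.ne'
    have hvb : v ≠ b := hbv.ne'
    have hanb : a ≠ b := hab.ne
    have huv : u ≠ v := by
      rintro rfl
      have hP1 : (Walk.cons hab Walk.nil).IsPath := by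
        simp [Walk.cons_isPath_iff, hanb]
      have hP2 : (Walk.cons hau (Walk.cons hbv.symm Walk.nil)).IsPath := by
        simp [Walk.cons_isPath_iff, hau.ne, hanb, hub]
      have heq := hac.path_unique ⟨_, hP1⟩ ⟨_, hP2⟩
      have hlen := congrArg (fun q : T.Path a b => q.1.length) heq
      simp at hlen
    obtain ⟨w, hwmem⟩ : ∃ w : V, w ∉ ({u, a, b, v} : Finset V) := by
      by_contra hall
      push_neg at hall
      have hle : Fintype.card V ≤ ({u, a, b, v} : Finset V).card := by
        rw [← Finset.card_univ]
        exact Finset.card_le_card fun x _ => hall x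
      have h1 := Finset.card_insert_le u ({a, b, v} : Finset V)
      have h2 := Finset.card_insert_le a ({b, v} : Finset V)
      have h3 := Finset.card_insert_le b ({v} : Finset V)
      rw [Finset.card_singleton] at h3
      omega
    simp only [Finset.mem_insert, Finset.mem_singleton, not_or] at hwmem
    obtain ⟨hwu, hwa, hwb, hwv⟩ := hwmem
    have hScard : ({u, v, w} : Finset V).card = 3 := by
      rw [Finset.card_insert_of_notMem (by simp [huv, Ne.symm hwu]),
        Finset.card_insert_of_notMem (by simp [Ne.symm hwv]), Finset.card_singleton]
    have hlow : ∀ H : T.Subgraph, H.Connected → ↑({u, v, w} : Finset V) ⊆ H.verts →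
        4 ≤ H.edgeSet.ncard := by
      intro H hHc hHs
      have hu' : u ∈ H.verts := hHs (by simp)
      have hv' : v ∈ H.verts := hHs (by simp)
      have hw' : w ∈ H.verts := hHs (by simp)
      have hP : (Walk.cons hau.symm (Walk.cons hab (Walk.cons hbv Walk.nil))).IsPath := by
        simp [Walk.cons_isPath_iff, hua, hub, huv, hanb, Ne.symm hva, Ne.symm hvb]
      have hedges := path_edges_mem hac hHc hu' hv' hP
      have e1 : s(u, a) ∈ H.edgeSet := hedges _ (by simp)
      have e2 : s(a, b) ∈ H.edgeSet := hedges _ (by simp)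
      have e3 : s(b, v) ∈ H.edgeSet := hedges _ (by simp)
      obtain ⟨W, hW⟩ := walk_edges_mem hHc hw' hu'
      cases W with
      | nil => exact absurd rfl hwu
      | cons hwx W' =>
        rename_i x
        have e4 : s(w, x) ∈ H.edgeSet := hW _ (by simp)
        have hF : (({s(w, x), s(u, a), s(a, b), s(b, v)} : Finset (Sym2 V)) : Set (Sym2 V))
            ⊆ H.edgeSet := by
          intro e he
          simp only [Finset.coe_insert, Set.mem_insert_iff, Finset.coe_singleton,
            Set.mem_singleton_iff] at he
          rcases he with rfl | rfl | rfl | rfl <;> assumption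
        have hFcard : ({s(w, x), s(u, a), s(a, b), s(b, v)} : Finset (Sym2 V)).card = 4 := by
          rw [Finset.card_insert_of_notMem (by simp [hwu, hwa, hwb, hwv]),
            Finset.card_insert_of_notMem (by simp [hua, hub, huv, hanb]),
            Finset.card_insert_of_notMem (by simp [hanb, Ne.symm hva, Ne.symm hvb]),
            Finset.card_singleton]
        calc (4 : ℕ) = (({s(w, x), s(u, a), s(a, b), s(b, v)} : Finset (Sym2 V)) :
              Set (Sym2 V)).ncard := by rw [Set.ncard_coe_finset, hFcard]
          _ ≤ H.edgeSet.ncard := Set.ncard_le_ncard hF (Set.toFinite _)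
    have h4le : 4 ≤ steinerDist T ↑({u, v, w} : Finset V) := by
      refine le_csInf (hne_set _) ?_
      rintro m ⟨H, hc, hs, rfl⟩
      exact hlow H hc hs
    have hup : steinerDist T ↑({u, v, w} : Finset V) ≤ sdiam T 3 :=
      le_csSup hbdd ⟨_, hScard, rfl⟩
    omega
  · rintro ⟨c, hc⟩
    obtain ⟨t, hts, htcard⟩ := Finset.exists_subset_card_eq
      (show 3 ≤ (Finset.univ.erase c).card by
        rw [Finset.card_erase_of_mem (Finset.mem_univ c), Finset.card_univ]; omega)
    obtain ⟨x, y, z, hxy, hxz, hyz, rfl⟩ := Finset.card_eq_three.mp htcard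
    have hxc : x ≠ c := Finset.ne_of_mem_erase (hts (by simp))
    have hyc : y ≠ c := Finset.ne_of_mem_erase (hts (by simp))
    have hzc : z ≠ c := Finset.ne_of_mem_erase (hts (by simp))
    have hupper : ∀ S : Finset V, S.card = 3 → steinerDist T ↑S ≤ 3 := by
      intro S hS
      obtain ⟨p, q, r, hpq, hpr, hqr, rfl⟩ := Finset.card_eq_three.mp hS
      set K : V → T.Subgraph := fun v =>
        if h : T.Adj c v then T.subgraphOfAdj h else T.singletonSubgraph c with hKdef
      have hKconn : ∀ v, (K v).Connected := by
        intro v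
        by_cases h : T.Adj c v
        · simpa [hKdef, h] using subgraphOfAdj_connected h
        · simpa [hKdef, h] using (Subgraph.singletonSubgraph_connected (G := T) (v := c))
      have hKc : ∀ v, c ∈ (K v).verts := by
        intro v
        by_cases h : T.Adj c v <;> simp [hKdef, h, singletonSubgraph_verts]
      have hKv : ∀ v, v ∈ (K v).verts := by
        intro v
        by_cases hvc : v = c
        · subst hvc; exact hKc v
        · have h := hc v hvc
          simp [hKdef, h]
      have hKcard : ∀ v, (K v).edgeSet.ncard ≤ 1 := by
        intro v
        by_cases h : T.Adj c v
        · simp [hKdef, h, edgeSet_subgraphOfAdj]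
        · simp [hKdef, h, edgeSet_singletonSubgraph]
      have hconnH : (K p ⊔ K q ⊔ K r).Connected := by
        refine Subgraph.connected_sup (?_ : (K p ⊔ K q).Connected).preconnected (hKconn r).preconnected ?_
        · exact Subgraph.connected_sup (hKconn p).preconnected (hKconn q).preconnected
            ⟨c, by simp [Subgraph.verts_inf, hKc p, hKc q]⟩
        · exact ⟨c, by simp [Subgraph.verts_inf, Subgraph.verts_sup, hKc p, hKc r]⟩
      have hsub : ↑({p, q, r} : Finset V) ⊆ (K p ⊔ K q ⊔ K r).verts := by
        intro s hs
        simp only [Finset.coe_insert, Set.mem_insert_iff, Finset.coe_singleton,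
          Set.mem_singleton_iff] at hs
        simp only [Subgraph.verts_sup, Set.mem_union]
        rcases hs with rfl | rfl | rfl
        · exact Or.inl (Or.inl (hKv s))
        · exact Or.inl (Or.inr (hKv s))
        · exact Or.inr (hKv s)
      have hstep : steinerDist T ↑({p, q, r} : Finset V) ≤ (K p ⊔ K q ⊔ K r).edgeSet.ncard :=
        Nat.sInf_le ⟨_, hconnH, hsub, rfl⟩
      have hb : (K p ⊔ K q ⊔ K r).edgeSet.ncard ≤ 3 := by
        have hEq : (K p ⊔ K q ⊔ K r).edgeSet
            = (K p).edgeSet ∪ (K q).edgeSet ∪ (K r).edgeSet := by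
          rw [Subgraph.edgeSet_sup, Subgraph.edgeSet_sup]
        rw [hEq]
        have u1 := Set.ncard_union_le ((K p).edgeSet ∪ (K q).edgeSet) ((K r).edgeSet)
        have u2 := Set.ncard_union_le ((K p).edgeSet) ((K q).edgeSet)
        have k1 := hKcard p
        have k2 := hKcard q
        have k3 := hKcard r
        omega
      omega
    have h3mem : steinerDist T ↑({x, y, z} : Finset V) = 3 := by
      refine le_antisymm (hupper _ htcard) ?_
      refine le_csInf (hne_set _) ?_
      rintro m ⟨H, hHc, hHs, rfl⟩
      have hx' : x ∈ H.verts := hHs (by simp)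
      have hy' : y ∈ H.verts := hHs (by simp)
      have hz' : z ∈ H.verts := hHs (by simp)
      have hP1 : (Walk.cons (hc x hxc).symm (Walk.cons (hc y hyc) Walk.nil)).IsPath := by
        simp [Walk.cons_isPath_iff, hxc, hxy, Ne.symm hyc]
      have hP2 : (Walk.cons (hc x hxc).symm (Walk.cons (hc z hzc) Walk.nil)).IsPath := by
        simp [Walk.cons_isPath_iff, hxc, hxz, Ne.symm hzc]
      have hed1 := path_edges_mem hac hHc hx' hy' hP1
      have hed2 := path_edges_mem hac hHc hx' hz' hP2
      have e1 : s(x, c) ∈ H.edgeSet := hed1 _ (by simp)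
      have e2 : s(c, y) ∈ H.edgeSet := hed1 _ (by simp)
      have e3 : s(c, z) ∈ H.edgeSet := hed2 _ (by simp)
      have hF : (({s(x, c), s(c, y), s(c, z)} : Finset (Sym2 V)) : Set (Sym2 V))
          ⊆ H.edgeSet := by
        intro e he
        simp only [Finset.coe_insert, Set.mem_insert_iff, Finset.coe_singleton,
          Set.mem_singleton_iff] at he
        rcases he with rfl | rfl | rfl <;> assumption
      have hFcard : ({s(x, c), s(c, y), s(c, z)} : Finset (Sym2 V)).card = 3 := by
        rw [Finset.card_insert_of_notMem (by simp [hxc, hxy, hxz]),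
          Finset.card_insert_of_notMem (by simp [hyz, Ne.symm hyc, Ne.symm hzc]),
          Finset.card_singleton]
      calc (3 : ℕ) = (({s(x, c), s(c, y), s(c, z)} : Finset (Sym2 V)) :
            Set (Sym2 V)).ncard := by rw [Set.ncard_coe_finset, hFcard]
        _ ≤ H.edgeSet.ncard := Set.ncard_le_ncard hF (Set.toFinite _)
    refine le_antisymm ?_ ?_
    · refine csSup_le ⟨3, ⟨{x, y, z}, htcard, h3mem⟩⟩ ?_
      rintro m ⟨S, hS, rfl⟩
      exact hupper S hS
    · exact le_csSup hbdd ⟨{x, y, z}, htcard, h3mem⟩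
end

section
/- For odd n, the graph G obtained from the complete graph K_n by deleting a maximum matching (of size (n−1)/2) satisfies sdiam_3(G) = 2, Δ(G) = n − 1, and e(G) = C(n,2) − (n−1)/2; moreover, every graph H of order n with sdiam_3(H) = 2 and Δ(H) = n − 1 has at least C(n,2) − (n−1)/2 edges. -/
open SimpleGraph

lemma conn_card_le {V : Type*} [Fintype V] {G : SimpleGraph V} (h : G.Connected) :
    Fintype.card V ≤ G.edgeSet.ncard + 1 := by
  classical
  obtain ⟨r⟩ := h.nonempty
  have key : ∀ w : V, w ≠ r → ∃ z : V, G.Adj w z ∧ G.dist z r < G.dist w r := by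
    intro w hw
    obtain ⟨p, hp⟩ := (h.preconnected w r).exists_walk_length_eq_dist
    cases p with
    | nil => exact absurd rfl hw
    | cons hadj q =>
      refine ⟨_, hadj, ?_⟩
      have h1 := G.dist_le q
      simp only [Walk.length_cons] at hp
      omega
  choose f hadj hlt using key
  have hinj : ∀ w1 ∈ Finset.univ.erase r, ∀ w2 ∈ Finset.univ.erase r,
      (fun w => if hw : w = r then s(r, r) else s(w, f w hw)) w1 =
      (fun w => if hw : w = r then s(r, r) else s(w, f w hw)) w2 → w1 = w2 := by
    intro w1 h1 w2 h2 he
    have hw1 : w1 ≠ r := Finset.ne_of_mem_erase h1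
    have hw2 : w2 ≠ r := Finset.ne_of_mem_erase h2
    simp only [dif_neg hw1, dif_neg hw2, Sym2.eq_iff] at he
    rcases he with ⟨h, -⟩ | ⟨ha, hb⟩
    · exact h
    · exfalso
      have t1 := hlt w1 hw1
      have t2 := hlt w2 hw2
      rw [hb] at t1
      rw [← ha] at t2
      omega
  have hmaps : ∀ w ∈ Finset.univ.erase r,
      (fun w => if hw : w = r then s(r, r) else s(w, f w hw)) w ∈ G.edgeFinset := by
    intro w hw
    have hw' : w ≠ r := Finset.ne_of_mem_erase hw
    simp only [dif_neg hw', mem_edgeFinset, mem_edgeSet]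
    exact hadj w hw'
  have hcard := Finset.card_le_card_of_injOn _ hmaps hinj
  rw [Finset.card_erase_of_mem (Finset.mem_univ r), Finset.card_univ] at hcard
  have : G.edgeFinset.card = G.edgeSet.ncard := (Set.ncard_eq_toFinset_card' _).symm
  omega

lemma subgraph_card_le {V : Type*} [Fintype V] {G : SimpleGraph V} {T : G.Subgraph}
    (h : T.Connected) : T.verts.ncard ≤ T.edgeSet.ncard + 1 := by
  classical
  have h1 : Fintype.card T.verts ≤ T.coe.edgeSet.ncard + 1 := conn_card_le h.coe
  have h2 : T.verts.ncard = Fintype.card T.verts := by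
    rw [← Nat.card_coe_set_eq, Nat.card_eq_fintype_card]
  have h3 : T.coe.edgeSet.ncard = T.edgeSet.ncard := by
    rw [← T.image_coe_edgeSet_coe]
    exact (Set.ncard_image_of_injective _ (Sym2.map.injective Subtype.val_injective)).symm
  omega

lemma two_le_edges {V : Type*} [Fintype V] {G : SimpleGraph V} {T : G.Subgraph}
    (h : T.Connected) {a b c : V} (hab : a ≠ b) (hac : a ≠ c) (hbc : b ≠ c)
    (hsub : ({a, b, c} : Set V) ⊆ T.verts) : 2 ≤ T.edgeSet.ncard := by
  have h3 : ({a, b, c} : Set V).ncard = 3 :=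
    Set.ncard_eq_three.mpr ⟨a, b, c, hab, hac, hbc, rfl⟩
  have := Set.ncard_le_ncard hsub T.verts.toFinite
  have := subgraph_card_le h
  omega

lemma path2_subgraph {V : Type*} {G : SimpleGraph V} {x y z : V}
    (hxy : G.Adj x y) (hyz : G.Adj y z) (hxz : x ≠ z) :
    ∃ T : G.Subgraph, T.Connected ∧ ({x, y, z} : Set V) ⊆ T.verts ∧ T.edgeSet.ncard = 2 := by
  let p : G.Walk x z := .cons hxy (.cons hyz .nil)
  refine ⟨p.toSubgraph, p.toSubgraph_connected, ?_, ?_⟩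
  · intro u hu
    have : p.toSubgraph.verts = {x, y} ∪ ({y, z} ∪ {z}) := by
      simp [p, Walk.toSubgraph]
    rw [this]
    rcases hu with rfl | rfl | rfl <;> simp
  · have : p.toSubgraph.edgeSet = {s(x, y)} ∪ ({s(y, z)} ∪ ∅) := by
      simp [p, Walk.toSubgraph, Subgraph.edgeSet_sup]
    rw [this]
    have hne : s(x, y) ≠ s(y, z) := by
      intro h
      rw [Sym2.eq_iff] at h
      rcases h with ⟨rfl, rfl⟩ | ⟨rfl, -⟩
      · exact hxz rfl
      · exact hxz rfl
    simp only [Set.union_empty, Set.union_singleton]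
    exact Set.ncard_pair hne.symm

lemma steiner_eq_two {V : Type*} [Fintype V] {G : SimpleGraph V} {a b c : V}
    (hab : a ≠ b) (hac : a ≠ c) (hbc : b ≠ c)
    (hpath : ∃ T : G.Subgraph, T.Connected ∧ ({a, b, c} : Set V) ⊆ T.verts ∧
      T.edgeSet.ncard = 2) :
    steinerDist G {a, b, c} = 2 := by
  have h2 : 2 ∈ {m : ℕ | ∃ H : G.Subgraph, H.Connected ∧ ({a, b, c} : Set V) ⊆ H.verts ∧
      H.edgeSet.ncard = m} := hpath
  refine le_antisymm (Nat.sInf_le h2) ?_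
  have hmem := Nat.sInf_mem (⟨2, h2⟩ : Set.Nonempty _)
  obtain ⟨T, hc, hs, he⟩ := hmem
  rw [steinerDist, ← he]
  exact two_le_edges hc hab hac hbc hs

lemma ncard_compl_singleton {V : Type*} [Fintype V] (v : V) :
    ({v}ᶜ : Set V).ncard = Fintype.card V - 1 := by
  rw [Set.compl_eq_univ_diff ({v} : Set V), Set.ncard_diff (by simp),
    Set.ncard_univ, Set.ncard_singleton, Nat.card_eq_fintype_card]

lemma ncard_top_edgeSet {V : Type*} [Fintype V] :
    (⊤ : SimpleGraph V).edgeSet.ncard = (Fintype.card V).choose 2 := by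
  classical
  rw [Set.ncard_eq_toFinset_card']
  exact card_edgeFinset_top_eq_card_choose_two

theorem stmt11 (n : ℕ) (hodd : Odd n) (hn : 3 ≤ n) {V : Type*} [Fintype V]
    (hcard : Fintype.card V = n) (M : (⊤ : SimpleGraph V).Subgraph)
    (hM : M.IsMatching) (hMsize : M.edgeSet.ncard = (n - 1) / 2) :
    sdiam ((⊤ : SimpleGraph V).deleteEdges M.edgeSet) 3 = 2 ∧
    maxDeg ((⊤ : SimpleGraph V).deleteEdges M.edgeSet) = n - 1 ∧
    ((⊤ : SimpleGraph V).deleteEdges M.edgeSet).edgeSet.ncard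
      = n.choose 2 - (n - 1) / 2 ∧
    ∀ H : SimpleGraph V, sdiam H 3 = 2 → maxDeg H = n - 1 →
      n.choose 2 - (n - 1) / 2 ≤ H.edgeSet.ncard := by
  classical
  set G := (⊤ : SimpleGraph V).deleteEdges M.edgeSet with hG
  have hAdj : ∀ u w : V, G.Adj u w ↔ u ≠ w ∧ s(u, w) ∉ M.edgeSet := by
    intro u w
    rw [hG, deleteEdges_adj, top_adj]
  have hMun : ∀ u v w : V, s(u, v) ∈ M.edgeSet → s(u, w) ∈ M.edgeSet → v = w := by
    intro u v w h1 h2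
    have hv : M.Adj u v := Subgraph.mem_edgeSet.mp h1
    have hw : M.Adj u w := Subgraph.mem_edgeSet.mp h2
    obtain ⟨x, -, hx⟩ := hM (M.edge_vert hv)
    exact (hx v hv).trans (hx w hw).symm
  -- every triple has Steiner distance 2
  have hTriple : ∀ S : Finset V, S.card = 3 → steinerDist G ↑S = 2 := by
    intro S hS
    obtain ⟨a, b, c, hab, hac, hbc, rfl⟩ := Finset.card_eq_three.mp hS
    have hcoe : (↑({a, b, c} : Finset V) : Set V) = ({a, b, c} : Set V) := by simp
    rw [hcoe]
    by_cases h1 : s(a, b) ∈ M.edgeSet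
    · have hac' : s(a, c) ∉ M.edgeSet := fun h => hbc (hMun a b c h1 h)
      have hbc' : s(b, c) ∉ M.edgeSet := fun h =>
        hac (hMun b a c (by rwa [Sym2.eq_swap]) h)
      have e1 : G.Adj a c := (hAdj a c).mpr ⟨hac, hac'⟩
      have e2 : G.Adj c b := (hAdj c b).mpr ⟨fun h => hbc h.symm, by rwa [Sym2.eq_swap]⟩
      obtain ⟨T, h₁, h₂, h₃⟩ := path2_subgraph e1 e2 hab
      refine steiner_eq_two hab hac hbc ⟨T, h₁, ?_, h₃⟩
      intro u hu
      apply h₂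
      rcases hu with rfl | rfl | rfl <;> simp
    · by_cases h2 : s(b, c) ∈ M.edgeSet
      · have hac' : s(a, c) ∉ M.edgeSet := fun h =>
          hab (hMun c b a (by rwa [Sym2.eq_swap]) (by rwa [Sym2.eq_swap])).symm
        have e1 : G.Adj b a := (hAdj b a).mpr ⟨fun h => hab h.symm, by rwa [Sym2.eq_swap]⟩
        have e2 : G.Adj a c := (hAdj a c).mpr ⟨hac, hac'⟩
        obtain ⟨T, h₁, h₂, h₃⟩ := path2_subgraph e1 e2 hbc
        refine steiner_eq_two hab hac hbc ⟨T, h₁, ?_, h₃⟩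
        intro u hu
        apply h₂
        rcases hu with rfl | rfl | rfl <;> simp
      · have e1 : G.Adj a b := (hAdj a b).mpr ⟨hab, h1⟩
        have e2 : G.Adj b c := (hAdj b c).mpr ⟨hbc, h2⟩
        obtain ⟨T, h₁, h₂, h₃⟩ := path2_subgraph e1 e2 hac
        exact steiner_eq_two hab hac hbc ⟨T, h₁, h₂, h₃⟩
  have part1 : sdiam G 3 = 2 := by
    have hset : {m : ℕ | ∃ S : Finset V, S.card = 3 ∧ steinerDist G ↑S = m} = {2} := by
      ext m
      simp only [Set.mem_setOf_eq, Set.mem_singleton_iff]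
      constructor
      · rintro ⟨S, hS, rfl⟩
        exact hTriple S hS
      · rintro rfl
        obtain ⟨S, -, hS⟩ := Finset.exists_subset_card_eq
          (show 3 ≤ (Finset.univ : Finset V).card by rw [Finset.card_univ, hcard]; exact hn)
        exact ⟨S, hS, hTriple S hS⟩
    rw [sdiam, hset, csSup_singleton]
  -- a vertex not covered by the matching
  have hex : ∃ w : V, w ∉ M.verts := by
    by_contra h
    push_neg at h
    haveI : Fintype M.verts := M.verts.toFinite.fintype
    have heven := hM.even_card
    have : M.verts.toFinset = Finset.univ := Finset.eq_univ_iff_forall.mpr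
      (fun v => Set.mem_toFinset.mpr (h v))
    rw [this, Finset.card_univ, hcard] at heven
    exact (Nat.not_even_iff_odd.mpr hodd) heven
  obtain ⟨w, hw⟩ := hex
  have hNw : G.neighborSet w = {w}ᶜ := by
    ext u
    simp only [mem_neighborSet, Set.mem_compl_iff, Set.mem_singleton_iff, hAdj]
    constructor
    · rintro ⟨h, -⟩
      exact fun hu => h hu.symm
    · intro hu
      refine ⟨fun h => hu h.symm, fun hmem => hw (M.edge_vert (Subgraph.mem_edgeSet.mp hmem))⟩
  have hub : ∀ (K : SimpleGraph V) (v : V), (K.neighborSet v).ncard ≤ n - 1 := by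
    intro K v
    have hsub : K.neighborSet v ⊆ {v}ᶜ := by
      intro u hu
      simp only [Set.mem_compl_iff, Set.mem_singleton_iff]
      exact fun h => K.irrefl (h ▸ hu)
    calc (K.neighborSet v).ncard ≤ ({v}ᶜ : Set V).ncard :=
          Set.ncard_le_ncard hsub ({v}ᶜ : Set V).toFinite
      _ = n - 1 := by rw [ncard_compl_singleton, hcard]
  have part2 : maxDeg G = n - 1 := by
    refine le_antisymm (Finset.sup_le fun v _ => hub G v) ?_
    have := Finset.le_sup (f := fun v => (G.neighborSet v).ncard) (Finset.mem_univ w)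
    simp only [hNw] at this
    rwa [ncard_compl_singleton, hcard] at this
  have part3 : G.edgeSet.ncard = n.choose 2 - (n - 1) / 2 := by
    have hE : G.edgeSet = (⊤ : SimpleGraph V).edgeSet \ M.edgeSet :=
      edgeSet_deleteEdges _
    rw [hE, Set.ncard_diff M.edgeSet_subset, ncard_top_edgeSet, hcard, hMsize]
  refine ⟨part1, part2, part3, ?_⟩
  intro H hsd hdeg
  -- a universal vertex of H
  have hVne : (Finset.univ : Finset V).Nonempty := by
    rw [← Finset.card_pos, Finset.card_univ, hcard]; omega
  obtain ⟨v, -, hv⟩ := Finset.exists_mem_eq_sup Finset.univ hVne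
    (fun v => (H.neighborSet v).ncard)
  have hvd : (H.neighborSet v).ncard = n - 1 := by
    rw [← hv]; exact hdeg
  have hNv : H.neighborSet v = {v}ᶜ := by
    refine Set.eq_of_subset_of_ncard_le ?_ ?_ ({v}ᶜ : Set V).toFinite
    · intro u hu
      simp only [Set.mem_compl_iff, Set.mem_singleton_iff]
      exact fun h => H.irrefl (h ▸ hu)
    · rw [hvd, ncard_compl_singleton, hcard]
  have hAdjv : ∀ u : V, u ≠ v → H.Adj v u := by
    intro u hu
    have : u ∈ H.neighborSet v := by
      rw [hNv]; simpa using hu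
    exact this
  haveI : Nonempty V := ⟨v⟩
  have hconn : H.Connected := by
    rw [connected_iff]
    have hr : ∀ x : V, H.Reachable v x := by
      intro x
      by_cases h : x = v
      · subst h
        exact Reachable.refl x
      · exact (hAdjv x h).reachable
    exact ⟨fun x y => (hr x).symm.trans (hr y), inferInstance⟩
  have htop : (⊤ : H.Subgraph).Connected :=
    Subgraph.connected_iff'.mpr (Subgraph.topIso.connected_iff.mpr hconn)
  -- key: no vertex has two non-neighbors
  have key : ∀ x y z : V, x ≠ y → x ≠ z → y ≠ z → ¬H.Adj x y → ¬H.Adj x z → False := by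
    intro x y z hxy hxz hyz nxy nxz
    have hSfin : ({x, y, z} : Finset V).card = 3 :=
      Finset.card_eq_three.mpr ⟨x, y, z, hxy, hxz, hyz, rfl⟩
    have hcoe : (↑({x, y, z} : Finset V) : Set V) = ({x, y, z} : Set V) := by simp
    have hne : Set.Nonempty {k : ℕ | ∃ T : H.Subgraph, T.Connected ∧
        (↑({x, y, z} : Finset V) : Set V) ⊆ T.verts ∧ T.edgeSet.ncard = k} :=
      ⟨_, ⊤, htop, by simp, rfl⟩
    have hmemsup : steinerDist H ↑({x, y, z} : Finset V) ∈
        {m : ℕ | ∃ S : Finset V, S.card = 3 ∧ steinerDist H ↑S = m} := ⟨_, hSfin, rfl⟩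
    have hbdd : BddAbove {m : ℕ | ∃ S : Finset V, S.card = 3 ∧ steinerDist H ↑S = m} := by
      refine ⟨Nat.card (Sym2 V), ?_⟩
      rintro m ⟨S, hS, rfl⟩
      have hne' : Set.Nonempty {k : ℕ | ∃ T : H.Subgraph, T.Connected ∧
          (↑S : Set V) ⊆ T.verts ∧ T.edgeSet.ncard = k} := ⟨_, ⊤, htop, by simp, rfl⟩
      obtain ⟨T, -, -, hT⟩ := Nat.sInf_mem hne'
      rw [steinerDist, ← hT]
      calc T.edgeSet.ncard ≤ (Set.univ : Set (Sym2 V)).ncard :=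
            Set.ncard_le_ncard (Set.subset_univ _) Set.finite_univ
        _ = Nat.card (Sym2 V) := Set.ncard_univ _
    have hle : steinerDist H ↑({x, y, z} : Finset V) ≤ 2 := by
      rw [sdiam] at hsd
      rw [← hsd]
      exact le_csSup hbdd hmemsup
    obtain ⟨T, hTc, hTs, hTe⟩ := Nat.sInf_mem hne
    have hTs' : ({x, y, z} : Set V) ⊆ T.verts := hcoe ▸ hTs
    have h2 : T.edgeSet.ncard = 2 := by
      have hge := two_le_edges hTc hxy hxz hyz hTs'
      have heq : steinerDist H ↑({x, y, z} : Finset V) = T.edgeSet.ncard := by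
        rw [steinerDist, hTe]
      omega
    have hverts : T.verts = ({x, y, z} : Set V) := by
      refine (Set.eq_of_subset_of_ncard_le hTs' ?_ T.verts.toFinite).symm
      have := subgraph_card_le hTc
      have h3 : ({x, y, z} : Set V).ncard = 3 :=
        Set.ncard_eq_three.mpr ⟨x, y, z, hxy, hxz, hyz, rfl⟩
      omega
    have hedge : ∀ e ∈ T.edgeSet, e = s(y, z) := by
      intro e he
      induction e with
      | h p q =>
        have hadj : T.Adj p q := Subgraph.mem_edgeSet.mp he
        have hp : p ∈ T.verts := T.edge_vert hadj
        have hq : q ∈ T.verts := T.edge_vert hadj.symm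
        have hH : H.Adj p q := T.adj_sub hadj
        rw [hverts] at hp hq
        rcases hp with rfl | rfl | rfl <;> rcases hq with rfl | rfl | rfl
        · exact absurd hH (H.irrefl)
        · exact absurd hH nxy
        · exact absurd hH nxz
        · exact absurd hH.symm nxy
        · exact absurd hH (H.irrefl)
        · rfl
        · exact absurd hH.symm nxz
        · exact Sym2.eq_swap
        · exact absurd hH (H.irrefl)
    obtain ⟨e1, e2, hne12, hset⟩ := Set.ncard_eq_two.mp h2
    have he1 : e1 = s(y, z) := hedge e1 (by rw [hset]; simp)
    have he2 : e2 = s(y, z) := hedge e2 (by rw [hset]; simp)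
    exact hne12 (he1.trans he2.symm)
  -- the complement has maximum degree at most 1
  have hdegC : ∀ u : V, (Hᶜ).degree u ≤ 1 := by
    intro u
    by_contra hgt
    push_neg at hgt
    obtain ⟨a, ha, b, hb, hab⟩ := Finset.one_lt_card.mp hgt
    rw [mem_neighborFinset, compl_adj] at ha hb
    exact key u a b ha.1 hb.1 hab ha.2 hb.2
  have hsum := (Hᶜ).sum_degrees_eq_twice_card_edges
  have hsumle : ∑ u : V, (Hᶜ).degree u ≤ n := by
    calc ∑ u : V, (Hᶜ).degree u ≤ ∑ _u : V, 1 :=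
          Finset.sum_le_sum (fun u _ => hdegC u)
      _ = n := by rw [Finset.sum_const, Finset.card_univ, hcard, smul_eq_mul, mul_one]
  have hCcard : (Hᶜ).edgeFinset.card ≤ (n - 1) / 2 := by
    obtain ⟨k, hk⟩ := hodd
    omega
  have hCn : (Hᶜ).edgeSet.ncard = (Hᶜ).edgeFinset.card := Set.ncard_eq_toFinset_card' _
  have hCe : (Hᶜ).edgeSet = (⊤ : SimpleGraph V).edgeSet \ H.edgeSet := by
    ext e
    induction e with
    | h p q =>
      simp only [mem_edgeSet, Set.mem_diff, compl_adj, top_adj]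
  have hsplit : ((⊤ : SimpleGraph V).edgeSet \ H.edgeSet).ncard + H.edgeSet.ncard
      = (⊤ : SimpleGraph V).edgeSet.ncard :=
    Set.ncard_diff_add_ncard_of_subset (edgeSet_mono le_top)
  have htc : (⊤ : SimpleGraph V).edgeSet.ncard = n.choose 2 := by
    rw [ncard_top_edgeSet, hcard]
  have hCc2 : ((⊤ : SimpleGraph V).edgeSet \ H.edgeSet).ncard ≤ (n - 1) / 2 := by
    rw [← hCe, hCn]
    exact hCcard
  omega
end

section
/- Let n ≥ 8 and let G be the complete bipartite graph K_{ℓ, n−ℓ} with n/2 ≤ ℓ ≤ n − 4. Then sdiam_3(G) = 3, Δ(G) = ℓ, and e(G) = ℓ(n − ℓ); consequently e_3(n, ℓ, 3) ≤ ℓ(n − ℓ), where e_3(n, ℓ, d) is the minimum number of edges of a graph of order n with maximum degree ℓ and Steiner 3-diameter at most d. -/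
open SimpleGraph

section Helpers

variable {V : Type*} {G : SimpleGraph V}

lemma mem_star {w x y z : V} (hwx : G.Adj w x) (hwy : G.Adj w y) (hwz : G.Adj w z) :
    ∃ m ∈ {m : ℕ | ∃ H : G.Subgraph, H.Connected ∧ ({x, y, z} : Set V) ⊆ H.verts ∧
      H.edgeSet.ncard = m}, m ≤ 3 := by
  set H : G.Subgraph := (G.subgraphOfAdj hwx ⊔ G.subgraphOfAdj hwy) ⊔ G.subgraphOfAdj hwz with hH
  have hconn : H.Connected := by
    refine Subgraph.connected_sup (Subgraph.Connected.preconnected ?_) (Subgraph.subgraphOfAdj_connected hwz).preconnected ⟨w, ?_⟩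
    · exact Subgraph.connected_sup (Subgraph.subgraphOfAdj_connected hwx).preconnected (Subgraph.subgraphOfAdj_connected hwy).preconnected
        ⟨w, by simp⟩
    · simp
  have hsub : ({x, y, z} : Set V) ⊆ H.verts := by
    intro v hv
    rcases hv with rfl | rfl | rfl <;> simp [hH]
  have hcard : H.edgeSet.ncard ≤ 3 := by
    have hsubE : H.edgeSet ⊆ {s(w, x), s(w, y), s(w, z)} := by
      rw [hH, Subgraph.edgeSet_sup, Subgraph.edgeSet_sup,
        edgeSet_subgraphOfAdj, edgeSet_subgraphOfAdj, edgeSet_subgraphOfAdj]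
      intro e he
      rcases he with (he | he) | he <;> simp_all
    calc H.edgeSet.ncard ≤ ({s(w, x), s(w, y), s(w, z)} : Set (Sym2 V)).ncard :=
          Set.ncard_le_ncard hsubE (Set.toFinite _)
      _ ≤ ({s(w, y), s(w, z)} : Set (Sym2 V)).ncard + 1 := Set.ncard_insert_le _ _
      _ ≤ (({s(w, z)} : Set (Sym2 V)).ncard + 1) + 1 := by
          exact Nat.add_le_add_right (Set.ncard_insert_le _ _) 1
      _ ≤ 3 := by simp
  exact ⟨H.edgeSet.ncard, ⟨H, hconn, hsub, rfl⟩, hcard⟩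

lemma mem_path {x y z : V} (hzx : G.Adj z x) (hzy : G.Adj z y) :
    ∃ m ∈ {m : ℕ | ∃ H : G.Subgraph, H.Connected ∧ ({x, y, z} : Set V) ⊆ H.verts ∧
      H.edgeSet.ncard = m}, m ≤ 3 := by
  set H : G.Subgraph := G.subgraphOfAdj hzx ⊔ G.subgraphOfAdj hzy with hH
  have hconn : H.Connected :=
    Subgraph.connected_sup (Subgraph.subgraphOfAdj_connected hzx).preconnected (Subgraph.subgraphOfAdj_connected hzy).preconnected
      ⟨z, by simp⟩
  have hsub : ({x, y, z} : Set V) ⊆ H.verts := by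
    intro v hv
    rcases hv with rfl | rfl | rfl <;> simp [hH]
  have hcard : H.edgeSet.ncard ≤ 3 := by
    have hsubE : H.edgeSet ⊆ {s(z, x), s(z, y)} := by
      rw [hH, Subgraph.edgeSet_sup, edgeSet_subgraphOfAdj, edgeSet_subgraphOfAdj]
      intro e he
      rcases he with he | he <;> simp_all
    calc H.edgeSet.ncard ≤ ({s(z, x), s(z, y)} : Set (Sym2 V)).ncard :=
          Set.ncard_le_ncard hsubE (Set.toFinite _)
      _ ≤ ({s(z, y)} : Set (Sym2 V)).ncard + 1 := Set.ncard_insert_le _ _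
      _ ≤ 3 := by simp
  exact ⟨H.edgeSet.ncard, ⟨H, hconn, hsub, rfl⟩, hcard⟩

lemma mem_bip (p : V → Bool) (hadj : ∀ u v, G.Adj u v ↔ p u ≠ p v)
    (ht : ∃ v, p v = true) (hf : ∃ v, p v = false) {x y z : V} :
    ∃ m ∈ {m : ℕ | ∃ H : G.Subgraph, H.Connected ∧ ({x, y, z} : Set V) ⊆ H.verts ∧
      H.edgeSet.ncard = m}, m ≤ 3 := by
  obtain ⟨t, hT⟩ := ht
  obtain ⟨f, hF⟩ := hf
  have adjOf : ∀ u v : V, p u ≠ p v → G.Adj u v := fun u v h => (hadj u v).mpr h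
  have hxzy : ({x, y, z} : Set V) = {x, z, y} := by ext v; simp; tauto
  have hyzx : ({x, y, z} : Set V) = {y, z, x} := by ext v; simp; tauto
  cases hx : p x <;> cases hy : p y <;> cases hz : p z
  · exact mem_star (adjOf t x (by simp [hT, hx])) (adjOf t y (by simp [hT, hy]))
      (adjOf t z (by simp [hT, hz]))
  · exact mem_path (adjOf z x (by simp [hz, hx])) (adjOf z y (by simp [hz, hy]))
  · rw [hxzy]
    exact mem_path (adjOf y x (by simp [hy, hx])) (adjOf y z (by simp [hy, hz]))
  · rw [hyzx]
    exact mem_path (adjOf x y (by simp [hx, hy])) (adjOf x z (by simp [hx, hz]))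
  · rw [hyzx]
    exact mem_path (adjOf x y (by simp [hx, hy])) (adjOf x z (by simp [hx, hz]))
  · rw [hxzy]
    exact mem_path (adjOf y x (by simp [hy, hx])) (adjOf y z (by simp [hy, hz]))
  · exact mem_path (adjOf z x (by simp [hz, hx])) (adjOf z y (by simp [hz, hy]))
  · exact mem_star (adjOf f x (by simp [hF, hx])) (adjOf f y (by simp [hF, hy]))
      (adjOf f z (by simp [hF, hz]))

lemma steinerDist_le_bip (p : V → Bool) (hadj : ∀ u v, G.Adj u v ↔ p u ≠ p v)
    (ht : ∃ v, p v = true) (hf : ∃ v, p v = false) (S : Finset V) (hS : S.card = 3) :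
    steinerDist G ↑S ≤ 3 := by
  classical
  obtain ⟨x, y, z, hxy, hxz, hyz, hSe⟩ := Finset.card_eq_three.mp hS
  rw [hSe]
  have hco : (↑({x, y, z} : Finset V) : Set V) = ({x, y, z} : Set V) := by simp
  rw [hco]
  obtain ⟨m, hm, hm3⟩ := mem_bip p hadj ht hf (x := x) (y := y) (z := z)
  exact le_trans (Nat.sInf_le hm) hm3

lemma exists_adj {H : G.Subgraph} (hc : H.Connected) {x y : V} (hx : x ∈ H.verts)
    (hy : y ∈ H.verts) (hxy : x ≠ y) : ∃ v, H.Adj x v := by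
  obtain ⟨wlk⟩ := hc.coe ⟨x, hx⟩ ⟨y, hy⟩
  cases wlk with
  | nil => exact absurd rfl hxy
  | cons h q => exact ⟨_, (Subgraph.coe_adj _ _ _).mp h⟩

lemma three_le_steinerDist [Finite V] {x y z : V} (hxy : x ≠ y) (hxz : x ≠ z) (hyz : y ≠ z)
    (nxy : ¬ G.Adj x y) (nxz : ¬ G.Adj x z) (nyz : ¬ G.Adj y z)
    (hne : {m : ℕ | ∃ H : G.Subgraph, H.Connected ∧ ({x, y, z} : Set V) ⊆ H.verts ∧
      H.edgeSet.ncard = m}.Nonempty) :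
    3 ≤ steinerDist G ({x, y, z} : Set V) := by
  refine le_csInf hne ?_
  rintro m ⟨H, hc, hsub, rfl⟩
  have hx : x ∈ H.verts := hsub (by simp)
  have hy : y ∈ H.verts := hsub (by simp)
  have hz : z ∈ H.verts := hsub (by simp)
  obtain ⟨vx, hvx⟩ := exists_adj hc hx hy hxy
  obtain ⟨vy, hvy⟩ := exists_adj hc hy hx (Ne.symm hxy)
  obtain ⟨vz, hvz⟩ := exists_adj hc hz hx (Ne.symm hxz)
  have key : ∀ {a b va vb : V}, H.Adj a va → H.Adj b vb → a ≠ b → ¬ G.Adj a b →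
      s(a, va) ≠ s(b, vb) := by
    intro a b va vb ha hb hab nab he
    rcases Sym2.eq_iff.mp he with ⟨rfl, _⟩ | ⟨rfl, rfl⟩
    · exact hab rfl
    · exact nab (H.adj_sub ha)
  have h12 : s(x, vx) ≠ s(y, vy) := key hvx hvy hxy nxy
  have h13 : s(x, vx) ≠ s(z, vz) := key hvx hvz hxz nxz
  have h23 : s(y, vy) ≠ s(z, vz) := key hvy hvz hyz nyz
  have hsubE : ({s(x, vx), s(y, vy), s(z, vz)} : Set (Sym2 V)) ⊆ H.edgeSet := by
    intro e he
    rcases he with rfl | rfl | rfl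
    · exact hvx
    · exact hvy
    · exact hvz
  calc (3 : ℕ) = ({s(x, vx), s(y, vy), s(z, vz)} : Set (Sym2 V)).ncard := by
        rw [Set.ncard_insert_of_notMem (by simp [h12, h13]) (Set.toFinite _),
          Set.ncard_pair h23]
    _ ≤ H.edgeSet.ncard := Set.ncard_le_ncard hsubE (Set.toFinite _)


lemma sdiam_le_bip [Fintype V] (p : V → Bool) (hadj : ∀ u v, G.Adj u v ↔ p u ≠ p v)
    (ht : ∃ v, p v = true) (hf : ∃ v, p v = false) : sdiam G 3 ≤ 3 := by
  rcases Set.eq_empty_or_nonempty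
      {m : ℕ | ∃ S : Finset V, S.card = 3 ∧ steinerDist G ↑S = m} with h | h
  · rw [sdiam, h, csSup_empty]
    exact Nat.zero_le 3
  · refine csSup_le h ?_
    rintro m ⟨S, hS, rfl⟩
    exact steinerDist_le_bip p hadj ht hf S hS

lemma sdiam_eq_bip [Fintype V] (p : V → Bool) (hadj : ∀ u v, G.Adj u v ↔ p u ≠ p v)
    (ht : ∃ v, p v = true) (hf : ∃ v, p v = false) {x y z : V}
    (hxy : x ≠ y) (hxz : x ≠ z) (hyz : y ≠ z)
    (hpx : p x = true) (hpy : p y = true) (hpz : p z = true) : sdiam G 3 = 3 := by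
  classical
  have nadj : ∀ {a b : V}, p a = true → p b = true → ¬ G.Adj a b := by
    intro a b ha hb hab
    rw [hadj] at hab
    rw [ha, hb] at hab
    exact hab rfl
  have hco : (↑({x, y, z} : Finset V) : Set V) = ({x, y, z} : Set V) := by simp
  have hcard : ({x, y, z} : Finset V).card = 3 :=
    Finset.card_eq_three.mpr ⟨x, y, z, hxy, hxz, hyz, rfl⟩
  have hne : {m : ℕ | ∃ H : G.Subgraph, H.Connected ∧ ({x, y, z} : Set V) ⊆ H.verts ∧
      H.edgeSet.ncard = m}.Nonempty := by
    obtain ⟨m, hm, _⟩ := mem_bip p hadj ht hf (x := x) (y := y) (z := z)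
    exact ⟨m, hm⟩
  have hsd : steinerDist G (↑({x, y, z} : Finset V)) = 3 := by
    rw [hco]
    refine le_antisymm ?_ (three_le_steinerDist hxy hxz hyz (nadj hpx hpy) (nadj hpx hpz)
      (nadj hpy hpz) hne)
    have := steinerDist_le_bip p hadj ht hf ({x, y, z} : Finset V) hcard
    rwa [hco] at this
  have hmem : 3 ∈ {m : ℕ | ∃ S : Finset V, S.card = 3 ∧ steinerDist G ↑S = m} :=
    ⟨{x, y, z}, hcard, hsd⟩
  refine le_antisymm ?_ ?_
  · exact csSup_le ⟨3, hmem⟩ (by rintro m ⟨S, hS, rfl⟩; exact steinerDist_le_bip p hadj ht hf S hS)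
  · exact le_csSup ⟨3, by rintro m ⟨S, hS, rfl⟩; exact steinerDist_le_bip p hadj ht hf S hS⟩ hmem


lemma neighborSet_bip [Fintype V] [DecidableEq V] (p : V → Bool)
    (hadj : ∀ u v, G.Adj u v ↔ p u ≠ p v) (v : V) :
    (G.neighborSet v).ncard =
      if p v = true then (Finset.univ.filter fun w => p w = false).card
      else (Finset.univ.filter fun w => p w = true).card := by
  have h1 : G.neighborSet v = ↑(Finset.univ.filter fun w => p w ≠ p v) := by
    ext w
    simp only [mem_neighborSet, Finset.coe_filter, Set.mem_setOf_eq, Finset.mem_univ, true_and]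
    rw [hadj]
    exact ne_comm
  rw [h1, Set.ncard_coe_finset]
  cases hv : p v
  · rw [if_neg (by simp [hv])]
    congr 1
    apply Finset.filter_congr
    intro w _
    simp [hv]
  · rw [if_pos rfl]
    congr 1
    apply Finset.filter_congr
    intro w _
    simp

lemma maxDeg_bip [Fintype V] [DecidableEq V] (p : V → Bool)
    (hadj : ∀ u v, G.Adj u v ↔ p u ≠ p v)
    (ht : ∃ v, p v = true) (hf : ∃ v, p v = false) :
    maxDeg G = max (Finset.univ.filter fun w => p w = true).card
      (Finset.univ.filter fun w => p w = false).card := by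
  obtain ⟨t, hT⟩ := ht
  obtain ⟨f, hF⟩ := hf
  refine le_antisymm (Finset.sup_le fun v _ => ?_) (max_le ?_ ?_)
  · rw [neighborSet_bip p hadj v]
    split
    · exact le_max_right _ _
    · exact le_max_left _ _
  · calc (Finset.univ.filter fun w => p w = true).card = (G.neighborSet f).ncard := by
          rw [neighborSet_bip p hadj f, if_neg (by simp [hF])]
      _ ≤ maxDeg G := Finset.le_sup (f := fun v => (G.neighborSet v).ncard) (Finset.mem_univ f)
  · calc (Finset.univ.filter fun w => p w = false).card = (G.neighborSet t).ncard := by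
          rw [neighborSet_bip p hadj t, if_pos hT]
      _ ≤ maxDeg G := Finset.le_sup (f := fun v => (G.neighborSet v).ncard) (Finset.mem_univ t)

lemma edgeCount_bip [Fintype V] [DecidableEq V] (p : V → Bool)
    (hadj : ∀ u v, G.Adj u v ↔ p u ≠ p v) :
    G.edgeSet.ncard = (Finset.univ.filter fun w => p w = true).card *
      (Finset.univ.filter fun w => p w = false).card := by
  classical
  set a := (Finset.univ.filter fun w => p w = true).card with ha
  set b := (Finset.univ.filter fun w => p w = false).card with hb
  have hdeg : ∀ v : V, G.degree v = if p v = true then b else a := by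
    intro v
    rw [← neighborSet_bip p hadj v]
    rw [SimpleGraph.degree, neighborFinset_def, Set.ncard_eq_toFinset_card']
  have hsum : ∑ v : V, G.degree v = a * b + b * a := by
    rw [Finset.sum_congr rfl fun v _ => hdeg v, Finset.sum_ite, Finset.sum_const,
      Finset.sum_const, smul_eq_mul, smul_eq_mul]
    have : (Finset.univ.filter fun w => ¬ p w = true).card = b := by
      rw [hb]; congr 1; apply Finset.filter_congr; intro w _; simp
    rw [this, ← ha]
  have h2 : 2 * G.edgeFinset.card = 2 * (a * b) := by
    rw [← G.sum_degrees_eq_twice_card_edges, hsum, Nat.mul_comm b a]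
    ring
  have h3 : G.edgeFinset.card = a * b := Nat.eq_of_mul_eq_mul_left (by norm_num) h2
  rw [← h3, Set.ncard_eq_toFinset_card', edgeFinset]

end Helpers

theorem stmt14 (n ℓ : ℕ) (hn : 8 ≤ n) (hl1 : n ≤ 2 * ℓ) (hl2 : ℓ ≤ n - 4) :
    sdiam (completeBipartiteGraph (Fin ℓ) (Fin (n - ℓ))) 3 = 3 ∧
    maxDeg (completeBipartiteGraph (Fin ℓ) (Fin (n - ℓ))) = ℓ ∧
    (completeBipartiteGraph (Fin ℓ) (Fin (n - ℓ))).edgeSet.ncard = ℓ * (n - ℓ) ∧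
    e3 n ℓ 3 ≤ (ℓ * (n - ℓ) : ℕ) := by
  have hL : 4 ≤ ℓ := by omega
  have hR : 4 ≤ n - ℓ := by omega
  have hRL : n - ℓ ≤ ℓ := by omega
  set G := completeBipartiteGraph (Fin ℓ) (Fin (n - ℓ)) with hG
  have hadj : ∀ u v : Fin ℓ ⊕ Fin (n - ℓ), G.Adj u v ↔ u.isLeft ≠ v.isLeft := by
    intro u v
    cases u <;> cases v <;> simp [hG]
  have ht : ∃ v : Fin ℓ ⊕ Fin (n - ℓ), v.isLeft = true := ⟨Sum.inl ⟨0, by omega⟩, rfl⟩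
  have hf : ∃ v : Fin ℓ ⊕ Fin (n - ℓ), v.isLeft = false := ⟨Sum.inr ⟨0, by omega⟩, rfl⟩
  have ca : (Finset.univ.filter fun v : Fin ℓ ⊕ Fin (n - ℓ) => v.isLeft = true).card = ℓ := by
    rw [Finset.card_filter, Fintype.sum_sum_type]
    simp
  have cb : (Finset.univ.filter fun v : Fin ℓ ⊕ Fin (n - ℓ) => v.isLeft = false).card
      = n - ℓ := by
    rw [Finset.card_filter, Fintype.sum_sum_type]
    simp
  refine ⟨?_, ?_, ?_, ?_⟩
  · exact sdiam_eq_bip Sum.isLeft hadj ht hf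
      (x := Sum.inl ⟨0, by omega⟩) (y := Sum.inl ⟨1, by omega⟩) (z := Sum.inl ⟨2, by omega⟩)
      (by simp [Fin.ext_iff]) (by simp [Fin.ext_iff]) (by simp [Fin.ext_iff]) rfl rfl rfl
  · rw [maxDeg_bip Sum.isLeft hadj ht hf, ca, cb]
    omega
  · rw [edgeCount_bip Sum.isLeft hadj, ca, cb]
  · have hn' : ℓ + (n - ℓ) = n := by omega
    set e : (Fin ℓ ⊕ Fin (n - ℓ)) ≃ Fin n := finSumFinEquiv.trans (finCongr hn') with he
    set G' : SimpleGraph (Fin n) := SimpleGraph.comap (⇑e.symm) G with hG'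
    set p' : Fin n → Bool := fun v => (e.symm v).isLeft with hp'
    have hadj' : ∀ u v : Fin n, G'.Adj u v ↔ p' u ≠ p' v := by
      intro u v
      rw [hG', comap_adj]
      exact hadj _ _
    have ht' : ∃ v : Fin n, p' v = true := ⟨e (Sum.inl ⟨0, by omega⟩), by simp [hp']⟩
    have hf' : ∃ v : Fin n, p' v = false := ⟨e (Sum.inr ⟨0, by omega⟩), by simp [hp']⟩
    have hcount : ∀ q : Bool, (Finset.univ.filter fun v : Fin n => p' v = q).card =
        (Finset.univ.filter fun w : Fin ℓ ⊕ Fin (n - ℓ) => w.isLeft = q).card := by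
      intro q
      rw [Finset.card_filter, Finset.card_filter]
      exact Fintype.sum_equiv e.symm _ _ fun v => rfl
    have hmax' : maxDeg G' = ℓ := by
      rw [maxDeg_bip p' hadj' ht' hf', hcount, hcount, ca, cb]
      omega
    have hsd' : sdiam G' 3 ≤ 3 := sdiam_le_bip p' hadj' ht' hf'
    have hE' : G'.edgeSet.ncard = ℓ * (n - ℓ) := by
      rw [edgeCount_bip p' hadj', hcount, hcount, ca, cb]
    exact sInf_le ⟨G', hmax', hsd', by rw [hE']⟩
end

section
/- Let n ≥ 5 and n/2 ≤ ℓ ≤ n − 4. Every connected graph G of order n with Δ(G) = ℓ and sdiam_3(G) ≤ 3 has at least n edges, i.e., G is not a tree. -/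
open SimpleGraph Walk

private lemma exists_pred {V : Type*} {G : SimpleGraph V} (hconn : G.Connected) {w root : V}
    (hne : w ≠ root) : ∃ u, G.Adj w u ∧ G.dist u root + 1 = G.dist w root := by
  obtain ⟨p, hp⟩ := hconn.exists_walk_length_eq_dist w root
  have hpos : 0 < G.dist w root := hconn.pos_dist_of_ne hne
  cases p with
  | nil => exact absurd rfl hne
  | @cons _ x _ h q =>
    refine ⟨x, h, ?_⟩
    have h1 : G.dist x root ≤ q.length := G.dist_le q
    have h2 : G.dist w root ≤ G.dist w x + G.dist x root := hconn.dist_triangle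
    have h3 : G.dist w x ≤ 1 := by
      simpa using G.dist_le (Walk.cons h Walk.nil)
    simp only [Walk.length_cons] at hp
    omega

private lemma connected_card_le {V : Type*} [Fintype V] {G : SimpleGraph V}
    (hconn : G.Connected) : Fintype.card V ≤ G.edgeSet.ncard + 1 := by
  classical
  obtain ⟨root⟩ := hconn.nonempty
  choose! f hf1 hf2 using fun w (hw : w ≠ root) => exists_pred hconn hw
  set g : V → Sym2 V := fun w => s(w, f w) with hg
  have hinj : Set.InjOn g ({root}ᶜ : Set V) := by
    intro a ha b hb hab
    simp only [Set.mem_compl_iff, Set.mem_singleton_iff] at ha hb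
    simp only [hg, Sym2.eq_iff] at hab
    rcases hab with ⟨h1, _⟩ | ⟨h1, h2⟩
    · exact h1
    · have ha2 := hf2 a ha
      have hb2 := hf2 b hb
      rw [h2] at ha2
      rw [← h1] at hb2
      omega
  have hsub : g '' ({root}ᶜ : Set V) ⊆ G.edgeSet := by
    rintro e ⟨a, ha, rfl⟩
    exact hf1 a (by simpa using ha)
  have hcard : ({root}ᶜ : Set V).ncard ≤ G.edgeSet.ncard := by
    calc ({root}ᶜ : Set V).ncard = (g '' ({root}ᶜ : Set V)).ncard :=
          (Set.ncard_image_of_injOn hinj).symm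
      _ ≤ G.edgeSet.ncard := Set.ncard_le_ncard hsub (Set.toFinite _)
  have hcompl : ({root}ᶜ : Set V).ncard + 1 = Fintype.card V := by
    rw [add_comm, ← Set.ncard_singleton root, Set.ncard_add_ncard_compl {root}, Nat.card_eq_fintype_card]
  omega

private lemma connected_delete {V : Type*} {G : SimpleGraph V} (hconn : G.Connected) {v w : V}
    (hr : (G \ fromEdgeSet {s(v, w)}).Reachable v w) :
    (G \ fromEdgeSet {s(v, w)}).Connected := by
  rw [connected_iff]
  refine ⟨?_, hconn.nonempty⟩
  intro a b
  obtain ⟨p⟩ := hconn a b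
  induction p with
  | nil => rfl
  | @cons u x b h q ih =>
    refine Reachable.trans ?_ ih
    by_cases he : s(u, x) = s(v, w)
    · rw [Sym2.eq_iff] at he
      rcases he with ⟨rfl, rfl⟩ | ⟨rfl, rfl⟩
      · exact hr
      · exact hr.symm
    · exact Adj.reachable (by simp [sdiff_adj, h, he, G.ne_of_adj h])

private lemma subgraph_edge_bound {V : Type*} [Fintype V] {G : SimpleGraph V} {H : G.Subgraph}
    (hc : H.Connected) : H.verts.ncard ≤ H.edgeSet.ncard + 1 := by
  classical
  have h1 := connected_card_le (G := H.coe) hc.coe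
  have h2 : Fintype.card H.verts = H.verts.ncard := by
    rw [← Nat.card_coe_set_eq, Nat.card_eq_fintype_card]
  have h3 : H.coe.edgeSet.ncard = H.edgeSet.ncard := by
    rw [← H.image_coe_edgeSet_coe,
      Set.ncard_image_of_injective _ (Sym2.map.injective Subtype.val_injective)]
  omega


theorem stmt15 (n ℓ : ℕ) (hn : 5 ≤ n) (hl1 : n ≤ 2 * ℓ) (hl2 : ℓ ≤ n - 4)
    {V : Type*} [Fintype V] (hcard : Fintype.card V = n)
    (G : SimpleGraph V) (hconn : G.Connected) (hmax : maxDeg G = ℓ)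
    (hsd : sdiam G 3 ≤ 3) :
    n ≤ G.edgeSet.ncard := by
  classical
  have hn8 : 8 ≤ n := by omega
  have hV : Nonempty V := by rw [← Fintype.card_pos_iff, hcard]; omega
  have htopconn : (⊤ : G.Subgraph).Connected :=
    ⟨(Subgraph.topIso (G := G)).connected_iff.mpr hconn⟩
  by_cases hac : G.IsAcyclic
  · exfalso
    obtain ⟨c, -, hc⟩ := Finset.exists_mem_eq_sup Finset.univ Finset.univ_nonempty
        (fun v => (G.neighborSet v).ncard)
    rw [maxDeg] at hmax
    have hcdeg : (G.neighborSet c).ncard = ℓ := by rw [← hc, hmax]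
    have hl4 : 4 ≤ ℓ := by omega
    obtain ⟨u, hu⟩ : ∃ u, u ∉ insert c (G.neighborSet c) := by
      by_contra hcon
      push_neg at hcon
      have h1 := congrArg Set.ncard (Set.eq_univ_of_forall hcon)
      rw [Set.ncard_univ, Nat.card_eq_fintype_card, hcard] at h1
      have h2 := Set.ncard_insert_le c (G.neighborSet c)
      omega
    have huc : u ≠ c := fun h => hu (by simp [h])
    have huadj : ¬ G.Adj c u := fun h => hu (by simp [h])
    obtain ⟨p, hp⟩ : ∃ p : G.Walk c u, p.IsPath := by
      obtain ⟨p0⟩ := hconn c u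
      exact ⟨p0.bypass, p0.bypass_isPath⟩
    cases p with
    | nil => exact huc rfl
    | @cons _ x _ h q =>
      cases q with
      | nil => exact huadj h
      | @cons _ y _ h2 r =>
        rw [Walk.cons_isPath_iff] at hp
        have hyc : y ≠ c := by
          intro hey
          exact hp.2 (hey ▸ (by simp : y ∈ (Walk.cons h2 r).support))
        have hxc : x ≠ c := (G.ne_of_adj h).symm
        have hxy : x ≠ y := G.ne_of_adj h2
        have hcy_adj : ¬ G.Adj c y := by
          intro hadj
          have hP2 : (Walk.cons h (Walk.cons h2 Walk.nil) : G.Walk c y).IsPath := by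
            rw [Walk.isPath_def]
            simp [hxc.symm, hyc.symm, hxy]
          have heq := hac.path_unique ⟨Walk.cons h (Walk.cons h2 Walk.nil), hP2⟩
            (Path.singleton hadj)
          have := congrArg (fun q : G.Path c y => q.1.length) heq
          simp [Path.singleton] at this
        obtain ⟨w, hw_mem, hwx⟩ := Set.exists_ne_of_one_lt_ncard
          (show 1 < (G.neighborSet c).ncard by omega) x
        have hwadj : G.Adj c w := hw_mem
        have hwc : w ≠ c := (G.ne_of_adj hwadj).symm
        have hwy : w ≠ y := fun hxx => hcy_adj (hxx ▸ hwadj)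
        obtain ⟨z, hz⟩ : ∃ z, z ∉ ({w, c, x, y} : Set V) := by
          by_contra hcon
          push_neg at hcon
          have h1 := congrArg Set.ncard (Set.eq_univ_of_forall hcon)
          rw [Set.ncard_univ, Nat.card_eq_fintype_card, hcard] at h1
          have h2 : ({w, c, x, y} : Set V).ncard ≤ 4 := by
            calc ({w, c, x, y} : Set V).ncard ≤ ({c, x, y} : Set V).ncard + 1 :=
                  Set.ncard_insert_le _ _
              _ ≤ (({x, y} : Set V).ncard + 1) + 1 := by
                  have := Set.ncard_insert_le c ({x, y} : Set V); omega
              _ ≤ ((({y} : Set V).ncard + 1) + 1) + 1 := by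
                  have := Set.ncard_insert_le x ({y} : Set V); omega
              _ ≤ 4 := by rw [Set.ncard_singleton]
          omega
        simp only [Set.mem_insert_iff, Set.mem_singleton_iff, not_or] at hz
        obtain ⟨hzw, hzc, hzx, hzy⟩ := hz
        set S : Finset V := {w, y, z} with hSdef
        have hS3 : S.card = 3 := Finset.card_eq_three.mpr ⟨w, y, z, hwy, fun hh => hzw hh.symm, fun hh => hzy hh.symm, rfl⟩
        set P : G.Walk w y := Walk.cons hwadj.symm (Walk.cons h (Walk.cons h2 Walk.nil)) with hPdef
        have hPpath : P.IsPath := by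
          rw [Walk.isPath_def]
          simp [hPdef, hwc, hwx, hwy, hxc.symm, hyc.symm, hxy]
        have key : ∀ H : G.Subgraph, H.Connected → (↑S : Set V) ⊆ H.verts →
            4 ≤ H.edgeSet.ncard := by
          intro H hH hsub
          have hwv : w ∈ H.verts := hsub (by simp [hSdef])
          have hyv : y ∈ H.verts := hsub (by simp [hSdef])
          have hzv : z ∈ H.verts := hsub (by simp [hSdef])
          obtain ⟨q⟩ := hH.coe.preconnected ⟨w, hwv⟩ ⟨y, hyv⟩
          have hsupp : ∀ a ∈ (q.map H.hom).support, a ∈ H.verts := by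
            intro a ha
            rw [Walk.support_map] at ha
            obtain ⟨b, -, rfl⟩ := List.mem_map.mp ha
            exact b.2
          have huniq := hac.path_unique
            ⟨(q.map H.hom).bypass, (q.map H.hom).bypass_isPath⟩ ⟨P, hPpath⟩
          have hbp : (q.map H.hom).bypass = P := congrArg Subtype.val huniq
          have hPs : ∀ a ∈ P.support, a ∈ H.verts := fun a ha =>
            hsupp a ((q.map H.hom).support_bypass_subset (hbp ▸ ha))
          have hcv : c ∈ H.verts := hPs c (by simp [hPdef])
          have hxv : x ∈ H.verts := hPs x (by simp [hPdef])
          have hsub5 : ({w, c, x, y, z} : Set V) ⊆ H.verts := by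
            intro a ha
            simp only [Set.mem_insert_iff, Set.mem_singleton_iff] at ha
            rcases ha with rfl | rfl | rfl | rfl | rfl <;> assumption
          have h5 : ({w, c, x, y, z} : Set V).ncard = 5 := by
            rw [Set.ncard_insert_of_notMem (by simp [hwc, hwx, hwy, Ne.symm hzw]),
              Set.ncard_insert_of_notMem (by simp [hxc.symm, hyc.symm, Ne.symm hzc]),
              Set.ncard_insert_of_notMem (by simp [hxy, Ne.symm hzx]),
              Set.ncard_insert_of_notMem (by simp [Ne.symm hzy]),
              Set.ncard_singleton]
          have hle5 := Set.ncard_le_ncard hsub5 (Set.toFinite _)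
          have := subgraph_edge_bound hH
          omega
        have hSnone : {m : ℕ | ∃ H : G.Subgraph, H.Connected ∧ (↑S : Set V) ⊆ H.verts ∧
            H.edgeSet.ncard = m}.Nonempty :=
          ⟨G.edgeSet.ncard, ⊤, htopconn, by simp, rfl⟩
        obtain ⟨H, hH, hHsub, hHcard⟩ := Nat.sInf_mem hSnone
        have h4 : 4 ≤ steinerDist G ↑S := by
          unfold steinerDist
          rw [← hHcard]
          exact key H hH hHsub
        have hub : ∀ m ∈ {m : ℕ | ∃ S : Finset V, S.card = 3 ∧ steinerDist G ↑S = m},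
            m ≤ G.edgeSet.ncard := by
          rintro m ⟨T, hT, rfl⟩
          unfold steinerDist
          exact Nat.sInf_le ⟨⊤, htopconn, by simp, rfl⟩
        have hle : steinerDist G ↑S ≤ sdiam G 3 := by
          unfold sdiam
          exact le_csSup ⟨G.edgeSet.ncard, hub⟩ ⟨S, hS3, rfl⟩
        omega
  · rw [IsAcyclic] at hac
    push_neg at hac
    obtain ⟨v0, cyc, hcyc⟩ := hac
    have hlen := hcyc.three_le_length
    have hne : cyc.edges ≠ [] := by
      intro hnil
      have := cyc.length_edges
      rw [hnil] at this
      simp at this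
      omega
    have hex : ∃ e : Sym2 V, e ∈ cyc.edges := List.exists_mem_of_ne_nil _ hne
    rw [Sym2.exists] at hex
    obtain ⟨a, b, he⟩ := hex
    obtain ⟨hadj, hreach⟩ :=
      (adj_and_reachable_delete_edges_iff_exists_cycle).mpr ⟨v0, cyc, hcyc, he⟩
    have hG'conn := connected_delete hconn hreach
    have hcl := connected_card_le hG'conn
    have hE : (G \ fromEdgeSet {s(a, b)}).edgeSet = G.edgeSet \ {s(a, b)} := by
      rw [edgeSet_sdiff, edgeSet_fromEdgeSet, edgeSet_sdiff_sdiff_isDiag]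
    rw [hE] at hcl
    have hd : (G.edgeSet \ {s(a, b)}).ncard = G.edgeSet.ncard - 1 :=
      Set.ncard_diff_singleton_of_mem (show s(a, b) ∈ G.edgeSet from hadj)
    have hpos : 1 ≤ G.edgeSet.ncard := by
      have hmem : s(a, b) ∈ G.edgeSet := hadj
      have := (Set.ncard_pos (Set.toFinite G.edgeSet)).mpr ⟨_, hmem⟩
      omega
    omega
end

section
/- Every connected graph G of order n ≥ 6 with Δ(G) = n − 3 and sdiam_3(G) = 3 has at least 2n − 5 edges. -/
open SimpleGraph

lemma walk_length_le_ncard {V : Type*} [Fintype V] {G : SimpleGraph V} {H : G.Subgraph}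
    {a b : H.verts} (p : H.coe.Walk a b) (hp : p.IsPath) :
    p.length ≤ H.edgeSet.ncard := by
  classical
  have hinj : Function.Injective (Sym2.map (Subtype.val : H.verts → V)) :=
    Sym2.map.injective Subtype.val_injective
  have hnd : (p.edges.map (Sym2.map Subtype.val)).Nodup := hp.edges_nodup.map hinj
  have hsub : ↑(p.edges.map (Sym2.map Subtype.val)).toFinset ⊆ H.edgeSet := by
    intro e he
    simp only [Finset.coe_sort_coe, List.coe_toFinset, Set.mem_setOf_eq, List.mem_map] at he
    obtain ⟨e', he', rfl⟩ := he
    have h2 := p.edges_subset_edgeSet he'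
    rw [Subgraph.edgeSet_coe] at h2
    exact h2
  calc p.length = (p.edges.map (Sym2.map Subtype.val)).length := by simp
  _ = (p.edges.map (Sym2.map Subtype.val)).toFinset.card := (List.toFinset_card_of_nodup hnd).symm
  _ = ((p.edges.map (Sym2.map Subtype.val)).toFinset : Set (Sym2 V)).ncard := by
        rw [Set.ncard_coe_finset]
  _ ≤ H.edgeSet.ncard := Set.ncard_le_ncard hsub (Set.toFinite _)

lemma walk_cases {W : Type*} {Γ : SimpleGraph W} {a b : W} (p : Γ.Walk a b)
    (hp : p.IsPath) (hlen : p.length ≤ 3) (hab : a ≠ b) :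
    Γ.Adj a b ∨ (∃ w, Γ.Adj a w ∧ Γ.Adj w b) ∨
      (∃ w z, Γ.Adj a w ∧ Γ.Adj w z ∧ Γ.Adj z b ∧ a ≠ z ∧ w ≠ b ∧ w ≠ z) := by
  cases p with
  | nil => exact absurd rfl hab
  | cons h q =>
    rename_i w
    cases q with
    | nil => exact Or.inl h
    | cons h2 q2 =>
      rename_i z
      cases q2 with
      | nil => exact Or.inr (Or.inl ⟨w, h, h2⟩)
      | cons h3 q3 =>
        rename_i c
        cases q3 with
        | nil =>
          refine Or.inr (Or.inr ⟨w, z, h, h2, h3, ?_, ?_, ?_⟩)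
          · simp [Walk.isPath_def, Walk.support_cons] at hp
            tauto
          · simp [Walk.isPath_def, Walk.support_cons] at hp
            tauto
          · simp [Walk.isPath_def, Walk.support_cons] at hp
            tauto
        | cons h4 q4 =>
          exfalso
          simp [Walk.length_cons] at hlen
          omega

lemma steiner_structure {V : Type*} [Fintype V] {G : SimpleGraph V} {H : G.Subgraph}
    (hH : H.Connected) (hc3 : H.edgeSet.ncard ≤ 3)
    {s t r : V} (hs : s ∈ H.verts) (ht : t ∈ H.verts) (hr : r ∈ H.verts)
    (hst : s ≠ t) (hrs : r ≠ s) (hrt : r ≠ t) :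
    G.Adj s t ∨ (∃ w, G.Adj s w ∧ G.Adj w t) ∨
      (∃ w z, G.Adj s w ∧ G.Adj w z ∧ G.Adj z t ∧ (r = w ∨ r = z)) := by
  classical
  obtain ⟨w0⟩ := hH ⟨s, hs⟩ ⟨t, ht⟩
  obtain ⟨p, hp⟩ := w0.toPath
  have hlen : p.length ≤ 3 := le_trans (walk_length_le_ncard p hp) hc3
  have hst' : (⟨s, hs⟩ : H.verts) ≠ ⟨t, ht⟩ := fun h => hst (congrArg Subtype.val h)
  rcases walk_cases p hp hlen hst' with h | ⟨w', h1, h2⟩ | ⟨w', z', h1, h2, h3, hne1, hne2, hne3⟩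
  · exact Or.inl (H.coe_adj_sub _ _ h)
  · exact Or.inr (Or.inl ⟨w', H.coe_adj_sub _ _ h1, H.coe_adj_sub _ _ h2⟩)
  · refine Or.inr (Or.inr ⟨w', z', H.coe_adj_sub _ _ h1, H.coe_adj_sub _ _ h2,
      H.coe_adj_sub _ _ h3, ?_⟩)
    by_contra hcon
    push_neg at hcon
    obtain ⟨hrw, hrz⟩ := hcon
    -- r has a neighbor in H
    have hrs' : (⟨r, hr⟩ : H.verts) ≠ ⟨s, hs⟩ := fun h => hrs (congrArg Subtype.val h)
    obtain ⟨wr⟩ := hH ⟨r, hr⟩ ⟨s, hs⟩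
    obtain ⟨a', ha', -⟩ : ∃ a', H.coe.Adj ⟨r, hr⟩ a' ∧ True := by
      cases wr with
      | nil => exact absurd rfl hrs'
      | cons h q => exact ⟨_, h, trivial⟩
    -- four distinct edges in H.edgeSet
    let e1 : Sym2 V := s(s, (w' : V))
    let e2 : Sym2 V := s((w' : V), (z' : V))
    let e3 : Sym2 V := s((z' : V), t)
    let e4 : Sym2 V := s(r, (a' : V))
    have m1 : e1 ∈ H.edgeSet := (Subgraph.mem_edgeSet).2 h1
    have m2 : e2 ∈ H.edgeSet := (Subgraph.mem_edgeSet).2 h2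
    have m3 : e3 ∈ H.edgeSet := (Subgraph.mem_edgeSet).2 h3
    have m4 : e4 ∈ H.edgeSet := (Subgraph.mem_edgeSet).2 ha'
    have hsz : s ≠ (z' : V) := fun h => hne1 (Subtype.ext h)
    have hwt : (w' : V) ≠ t := fun h => hne2 (Subtype.ext h)
    have hwz : (w' : V) ≠ (z' : V) := fun h => hne3 (Subtype.ext h)
    have hsw : s ≠ (w' : V) := G.ne_of_adj (H.coe_adj_sub _ _ h1)
    have hzt : (z' : V) ≠ t := G.ne_of_adj (H.coe_adj_sub _ _ h3)
    have d12 : e1 ≠ e2 := by simp only [e1, e2, ne_eq, Sym2.eq_iff]; push_neg; tauto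
    have d13 : e1 ≠ e3 := by simp only [e1, e3, ne_eq, Sym2.eq_iff]; push_neg; tauto
    have d23 : e2 ≠ e3 := by simp only [e2, e3, ne_eq, Sym2.eq_iff]; push_neg; tauto
    have d41 : e4 ≠ e1 := by simp only [e4, e1, ne_eq, Sym2.eq_iff]; push_neg; tauto
    have d42 : e4 ≠ e2 := by simp only [e4, e2, ne_eq, Sym2.eq_iff]; push_neg; tauto
    have d43 : e4 ≠ e3 := by simp only [e4, e3, ne_eq, Sym2.eq_iff]; push_neg; tauto
    have hsubs : ↑({e4, e1, e2, e3} : Finset (Sym2 V)) ⊆ H.edgeSet := by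
      intro e he
      simp only [Finset.coe_insert, Set.mem_insert_iff, Finset.coe_singleton,
        Set.mem_singleton_iff] at he
      rcases he with rfl | rfl | rfl | rfl <;> assumption
    have hcard4 : ({e4, e1, e2, e3} : Finset (Sym2 V)).card = 4 := by
      rw [Finset.card_insert_of_notMem (by simp [d41, d42, d43]),
        Finset.card_insert_of_notMem (by simp [d12, d13]),
        Finset.card_insert_of_notMem (by simp [d23]), Finset.card_singleton]
    have : 4 ≤ H.edgeSet.ncard := by
      calc 4 = (↑({e4, e1, e2, e3} : Finset (Sym2 V)) : Set (Sym2 V)).ncard := by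
              rw [Set.ncard_coe_finset, hcard4]
      _ ≤ H.edgeSet.ncard := Set.ncard_le_ncard hsubs (Set.toFinite _)
    omega

theorem stmt18 {V : Type*} [Fintype V] (n : ℕ) (hn : 6 ≤ n)
    (hcard : Fintype.card V = n) (G : SimpleGraph V) (hconn : G.Connected)
    (hmax : maxDeg G = n - 3) (hsd : sdiam G 3 = 3) :
    2 * n - 5 ≤ G.edgeSet.ncard := by
  classical
  have hVne : (Finset.univ : Finset V).Nonempty := by
    rw [← Finset.card_pos, Finset.card_univ, hcard]; omega
  -- a vertex of maximum degree
  obtain ⟨v, -, hv⟩ := Finset.exists_mem_eq_sup Finset.univ hVne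
    (fun v => (G.neighborSet v).ncard)
  rw [maxDeg] at hmax
  rw [hmax] at hv
  set Nv : Finset V := G.neighborFinset v with hNv
  have hNvcard : Nv.card = n - 3 := by
    rw [hNv, neighborFinset_def, ← Set.ncard_eq_toFinset_card', ← hv]
  have hvnotin : v ∉ Nv := by simp [hNv]
  -- the two non-neighbors
  set M : Finset V := Finset.univ \ insert v Nv with hM
  have hMcard : M.card = 2 := by
    rw [hM, Finset.card_sdiff_of_subset (Finset.subset_univ _), Finset.card_univ, hcard,
      Finset.card_insert_of_notMem hvnotin, hNvcard]
    omega
  obtain ⟨x, y, hxy, hMeq⟩ := Finset.card_eq_two.mp hMcard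
  have hxM : x ∈ M := by rw [hMeq]; simp
  have hyM : y ∈ M := by rw [hMeq]; simp
  have hxv : x ≠ v := by rw [hM] at hxM; simp at hxM; tauto
  have hyv : y ≠ v := by rw [hM] at hyM; simp at hyM; tauto
  have hxNv : x ∉ Nv := by rw [hM] at hxM; simp at hxM; tauto
  have hyNv : y ∉ Nv := by rw [hM] at hyM; simp at hyM; tauto
  have hvx : ¬ G.Adj v x := fun h => hxNv (by rw [hNv, mem_neighborFinset]; exact h)
  have hvy : ¬ G.Adj v y := fun h => hyNv (by rw [hNv, mem_neighborFinset]; exact h)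
  have hcover : ∀ w : V, w ∉ Nv → w = v ∨ w = x ∨ w = y := by
    intro w hw
    by_contra hcon
    push_neg at hcon
    obtain ⟨h1, h2, h3⟩ := hcon
    have : w ∈ M := by rw [hM]; simp [h1, hw]
    rw [hMeq] at this
    simp at this
    tauto
  have hmemNv : ∀ w : V, G.Adj v w → w ∈ Nv := by
    intro w hw; rw [hNv, mem_neighborFinset]; exact hw
  -- Steiner tree extraction
  have stein : ∀ a b c : V, a ≠ b → a ≠ c → b ≠ c →
      ∃ H : G.Subgraph, H.Connected ∧ a ∈ H.verts ∧ b ∈ H.verts ∧ c ∈ H.verts ∧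
        H.edgeSet.ncard ≤ 3 := by
    intro a b c hab hac hbc
    have hScard : ({a, b, c} : Finset V).card = 3 := by
      rw [Finset.card_insert_of_notMem (by simp [hab, hac]),
        Finset.card_insert_of_notMem (by simp [hbc]), Finset.card_singleton]
    have htop : (⊤ : G.Subgraph).Connected :=
      Subgraph.connected_iff'.mpr ((Subgraph.topIso (G := G)).connected_iff.mpr hconn)
    have hne : {m : ℕ | ∃ H : G.Subgraph, H.Connected ∧
        ↑({a, b, c} : Finset V) ⊆ H.verts ∧ H.edgeSet.ncard = m}.Nonempty :=
      ⟨(⊤ : G.Subgraph).edgeSet.ncard, ⊤, htop, by simp, rfl⟩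
    have hmem := Nat.sInf_mem hne
    have hle : steinerDist G ↑({a, b, c} : Finset V) ≤ 3 := by
      rw [← hsd, sdiam]
      apply le_csSup
      · apply Set.Finite.bddAbove
        apply (Set.finite_range (fun S : Finset V => steinerDist G ↑S)).subset
        rintro m ⟨S, -, h⟩
        exact ⟨S, h⟩
      · exact ⟨{a, b, c}, hScard, rfl⟩
    rw [steinerDist] at hle
    obtain ⟨H, hHc, hHsub, hHcard⟩ := hmem
    refine ⟨H, hHc, hHsub (by simp), hHsub (by simp), hHsub (by simp), ?_⟩
    rw [hHcard]
    exact hle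
  -- neighbor sets of x and y inside Nv
  set A : Finset V := Nv.filter (fun w => G.Adj x w) with hA
  set B : Finset V := Nv.filter (fun w => G.Adj y w) with hB
  set C : Finset V := Nv \ (A ∪ B) with hC
  have hAsub : A ⊆ Nv := Finset.filter_subset _ _
  have hBsub : B ⊆ Nv := Finset.filter_subset _ _
  have hABsub : A ∪ B ⊆ Nv := Finset.union_subset hAsub hBsub
  -- every vertex of C has a neighbor in A ∪ B
  have keyC : ∀ u : V, ∃ w : V, u ∈ C → w ∈ A ∪ B ∧ G.Adj u w := by
    intro u
    by_cases huC : u ∈ C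
    swap
    · exact ⟨u, fun h => absurd h huC⟩
    rw [hC, Finset.mem_sdiff] at huC
    obtain ⟨huNv, huAB⟩ := huC
    have hux : ¬ G.Adj u x := by
      intro h
      exact huAB (Finset.mem_union_left _ (by rw [hA, Finset.mem_filter]; exact ⟨huNv, h.symm⟩))
    have huy : ¬ G.Adj u y := by
      intro h
      exact huAB (Finset.mem_union_right _ (by rw [hB, Finset.mem_filter]; exact ⟨huNv, h.symm⟩))
    have hunx : u ≠ x := fun h => hxNv (h ▸ huNv)
    have huny : u ≠ y := fun h => hyNv (h ▸ huNv)
    obtain ⟨H, hHc, hu, hx, hy, h3⟩ := stein u x y hunx huny hxy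
    rcases steiner_structure hHc h3 hu hx hy hunx (Ne.symm huny) (Ne.symm hxy)
      with h | ⟨w, h1, h2⟩ | ⟨w, z, h1, h2, hh3, hyw⟩
    · exact absurd h hux
    · -- w adjacent to u and x
      have hwv : w ≠ v := fun h => hvx (h ▸ h2)
      have hwx : w ≠ x := G.ne_of_adj h2
      have hwy : w ≠ y := fun h => huy (h ▸ h1)
      have hwNv : w ∈ Nv := by
        by_contra hnot
        rcases hcover w hnot with h | h | h
        · exact hwv h
        · exact hwx h
        · exact hwy h
      exact ⟨w, fun _ => ⟨Finset.mem_union_left _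
        (by rw [hA, Finset.mem_filter]; exact ⟨hwNv, h2.symm⟩), h1⟩⟩
    · rcases hyw with rfl | rfl
      · exact absurd h1 huy
      · -- y = z : w adjacent to u and y
        have hwv : w ≠ v := fun h => hvy (h ▸ h2)
        have hwy : w ≠ y := G.ne_of_adj h2
        have hwx : w ≠ x := fun h => hux (h ▸ h1)
        have hwNv : w ∈ Nv := by
          by_contra hnot
          rcases hcover w hnot with h | h | h
          · exact hwv h
          · exact hwx h
          · exact hwy h
        exact ⟨w, fun _ => ⟨Finset.mem_union_right _
          (by rw [hB, Finset.mem_filter]; exact ⟨hwNv, h2.symm⟩), h1⟩⟩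
  choose g hg using keyC
  -- either x ~ y or A ∩ B nonempty
  have keyXY : G.Adj x y ∨ (A ∩ B).Nonempty := by
    obtain ⟨H, hHc, hx, hy, hvv, h3⟩ := stein x y v hxy hxv hyv
    rcases steiner_structure hHc h3 hx hy hvv hxy (Ne.symm hxv) (Ne.symm hyv)
      with h | ⟨w, h1, h2⟩ | ⟨w, z, h1, h2, hh3, hvw⟩
    · exact Or.inl h
    · have hwv : w ≠ v := fun h => hvx (G.adj_symm (h ▸ h1))
      have hwx : w ≠ x := Ne.symm (G.ne_of_adj h1)
      have hwy : w ≠ y := G.ne_of_adj h2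
      have hwNv : w ∈ Nv := by
        by_contra hnot
        rcases hcover w hnot with h | h | h
        · exact hwv h
        · exact hwx h
        · exact hwy h
      refine Or.inr ⟨w, Finset.mem_inter.mpr ⟨?_, ?_⟩⟩
      · rw [hA, Finset.mem_filter]; exact ⟨hwNv, h1⟩
      · rw [hB, Finset.mem_filter]; exact ⟨hwNv, h2.symm⟩
    · rcases hvw with rfl | rfl
      · exact absurd h1.symm hvx
      · exact absurd hh3 hvy
  -- the edge families
  set F1 : Finset (Sym2 V) := Nv.image (fun w => s(v, w)) with hF1
  set F2 : Finset (Sym2 V) := A.image (fun w => s(x, w)) with hF2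
  set F3 : Finset (Sym2 V) := B.image (fun w => s(y, w)) with hF3
  set F4 : Finset (Sym2 V) := C.image (fun u => s(u, g u)) with hF4
  set F5 : Finset (Sym2 V) := if (A ∩ B).Nonempty then ∅ else {s(x, y)} with hF5
  have hCsub : C ⊆ Nv := by rw [hC]; exact Finset.sdiff_subset
  have hgAB : ∀ u ∈ C, g u ∈ A ∪ B := fun u hu => (hg u hu).1
  have hgadj : ∀ u ∈ C, G.Adj u (g u) := fun u hu => (hg u hu).2
  have hF5sub : F5 ⊆ {s(x, y)} := by rw [hF5]; split <;> simp
  -- pairwise disjointness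
  have d12 : Disjoint F1 F2 := by
    rw [Finset.disjoint_left]
    rintro e he1 he2
    simp only [hF1, hF2, Finset.mem_image] at he1 he2
    obtain ⟨w, hw, rfl⟩ := he1
    obtain ⟨w', hw', heq⟩ := he2
    rw [Sym2.eq_iff] at heq
    rcases heq with ⟨h1, h2⟩ | ⟨h1, h2⟩
    · exact hxv h1
    · exact hvnotin (h2 ▸ hAsub hw')
  have d13 : Disjoint F1 F3 := by
    rw [Finset.disjoint_left]
    rintro e he1 he2
    simp only [hF1, hF3, Finset.mem_image] at he1 he2
    obtain ⟨w, hw, rfl⟩ := he1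
    obtain ⟨w', hw', heq⟩ := he2
    rw [Sym2.eq_iff] at heq
    rcases heq with ⟨h1, h2⟩ | ⟨h1, h2⟩
    · exact hyv h1
    · exact hvnotin (h2 ▸ hBsub hw')
  have d14 : Disjoint F1 F4 := by
    rw [Finset.disjoint_left]
    rintro e he1 he2
    simp only [hF1, hF4, Finset.mem_image] at he1 he2
    obtain ⟨w, hw, rfl⟩ := he1
    obtain ⟨u, hu, heq⟩ := he2
    rw [Sym2.eq_iff] at heq
    rcases heq with ⟨h1, h2⟩ | ⟨h1, h2⟩
    · exact hvnotin (h1 ▸ hCsub hu)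
    · exact hvnotin (h2 ▸ hABsub (hgAB u hu))
  have d15 : Disjoint F1 F5 := by
    rw [Finset.disjoint_left]
    rintro e he1 he2
    have he2' := hF5sub he2
    simp only [Finset.mem_singleton] at he2'
    subst he2'
    simp only [hF1, Finset.mem_image] at he1
    obtain ⟨w, hw, heq⟩ := he1
    rw [Sym2.eq_iff] at heq
    rcases heq with ⟨h1, h2⟩ | ⟨h1, h2⟩
    · exact hxv h1.symm
    · exact hyv h1.symm
  have d23 : Disjoint F2 F3 := by
    rw [Finset.disjoint_left]
    rintro e he1 he2
    simp only [hF2, hF3, Finset.mem_image] at he1 he2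
    obtain ⟨w, hw, rfl⟩ := he1
    obtain ⟨w', hw', heq⟩ := he2
    rw [Sym2.eq_iff] at heq
    rcases heq with ⟨h1, h2⟩ | ⟨h1, h2⟩
    · exact hxy h1.symm
    · exact hxNv (h2 ▸ hBsub hw')
  have d24 : Disjoint F2 F4 := by
    rw [Finset.disjoint_left]
    rintro e he1 he2
    simp only [hF2, hF4, Finset.mem_image] at he1 he2
    obtain ⟨w, hw, rfl⟩ := he1
    obtain ⟨u, hu, heq⟩ := he2
    rw [Sym2.eq_iff] at heq
    rcases heq with ⟨h1, h2⟩ | ⟨h1, h2⟩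
    · exact hxNv (h1 ▸ hCsub hu)
    · exact hxNv (h2 ▸ hABsub (hgAB u hu))
  have d25 : Disjoint F2 F5 := by
    rw [Finset.disjoint_left]
    rintro e he1 he2
    have he2' := hF5sub he2
    simp only [Finset.mem_singleton] at he2'
    subst he2'
    simp only [hF2, Finset.mem_image] at he1
    obtain ⟨w, hw, heq⟩ := he1
    rw [Sym2.eq_iff] at heq
    rcases heq with ⟨h1, h2⟩ | ⟨h1, h2⟩
    · exact hyNv (h2 ▸ hAsub hw)
    · exact hxy h1
  have d34 : Disjoint F3 F4 := by
    rw [Finset.disjoint_left]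
    rintro e he1 he2
    simp only [hF3, hF4, Finset.mem_image] at he1 he2
    obtain ⟨w, hw, rfl⟩ := he1
    obtain ⟨u, hu, heq⟩ := he2
    rw [Sym2.eq_iff] at heq
    rcases heq with ⟨h1, h2⟩ | ⟨h1, h2⟩
    · exact hyNv (h1 ▸ hCsub hu)
    · exact hyNv (h2 ▸ hABsub (hgAB u hu))
  have d35 : Disjoint F3 F5 := by
    rw [Finset.disjoint_left]
    rintro e he1 he2
    have he2' := hF5sub he2
    simp only [Finset.mem_singleton] at he2'
    subst he2'
    simp only [hF3, Finset.mem_image] at he1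
    obtain ⟨w, hw, heq⟩ := he1
    rw [Sym2.eq_iff] at heq
    rcases heq with ⟨h1, h2⟩ | ⟨h1, h2⟩
    · exact hxy h1.symm
    · exact hxNv (h2 ▸ hBsub hw)
  have d45 : Disjoint F4 F5 := by
    rw [Finset.disjoint_left]
    rintro e he1 he2
    have he2' := hF5sub he2
    simp only [Finset.mem_singleton] at he2'
    subst he2'
    simp only [hF4, Finset.mem_image] at he1
    obtain ⟨u, hu, heq⟩ := he1
    rw [Sym2.eq_iff] at heq
    rcases heq with ⟨h1, h2⟩ | ⟨h1, h2⟩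
    · exact hxNv (h1 ▸ hCsub hu)
    · exact hyNv (h1 ▸ hCsub hu)
  -- total family
  set F : Finset (Sym2 V) := F1 ∪ (F2 ∪ (F3 ∪ (F4 ∪ F5))) with hF
  have hFcard : F.card = F1.card + (F2.card + (F3.card + (F4.card + F5.card))) := by
    rw [hF, Finset.card_union_of_disjoint, Finset.card_union_of_disjoint,
      Finset.card_union_of_disjoint, Finset.card_union_of_disjoint d45]
    · exact Finset.disjoint_union_right.mpr ⟨d34, d35⟩
    · exact Finset.disjoint_union_right.mpr ⟨d23, Finset.disjoint_union_right.mpr ⟨d24, d25⟩⟩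
    · exact Finset.disjoint_union_right.mpr ⟨d12, Finset.disjoint_union_right.mpr ⟨d13, Finset.disjoint_union_right.mpr ⟨d14, d15⟩⟩⟩
  -- F is a set of edges of G
  have hFedge : ↑F ⊆ G.edgeSet := by
    intro e he
    simp only [hF, Finset.coe_union, Set.mem_union, Finset.mem_coe] at he
    rcases he with he | he | he | he | he
    · simp only [hF1, Finset.mem_image] at he
      obtain ⟨w, hw, rfl⟩ := he
      rw [mem_edgeSet]
      rw [hNv, mem_neighborFinset] at hw
      exact hw
    · simp only [hF2, Finset.mem_image] at he
      obtain ⟨w, hw, rfl⟩ := he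
      rw [mem_edgeSet]
      rw [hA, Finset.mem_filter] at hw
      exact hw.2
    · simp only [hF3, Finset.mem_image] at he
      obtain ⟨w, hw, rfl⟩ := he
      rw [mem_edgeSet]
      rw [hB, Finset.mem_filter] at hw
      exact hw.2
    · simp only [hF4, Finset.mem_image] at he
      obtain ⟨u, hu, rfl⟩ := he
      rw [mem_edgeSet]
      exact hgadj u hu
    · have he' := hF5sub he
      simp only [Finset.mem_singleton] at he'
      subst he'
      rw [mem_edgeSet]
      rcases keyXY with h | h
      · exact h
      · exfalso
        rw [hF5, if_pos h] at he
        exact absurd he (Finset.notMem_empty _)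
  -- cardinalities of the families
  have injv : Function.Injective (fun w : V => s(v, w)) := by
    intro w1 w2 h
    rw [Sym2.eq_iff] at h
    rcases h with ⟨-, h⟩ | ⟨h1, h2⟩
    · exact h
    · exact h2.trans h1
  have injx : Function.Injective (fun w : V => s(x, w)) := by
    intro w1 w2 h
    rw [Sym2.eq_iff] at h
    rcases h with ⟨-, h⟩ | ⟨h1, h2⟩
    · exact h
    · exact h2.trans h1
  have injy : Function.Injective (fun w : V => s(y, w)) := by
    intro w1 w2 h
    rw [Sym2.eq_iff] at h
    rcases h with ⟨-, h⟩ | ⟨h1, h2⟩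
    · exact h
    · exact h2.trans h1
  have cF1 : F1.card = n - 3 := by rw [hF1, Finset.card_image_of_injective _ injv, hNvcard]
  have cF2 : F2.card = A.card := by rw [hF2, Finset.card_image_of_injective _ injx]
  have cF3 : F3.card = B.card := by rw [hF3, Finset.card_image_of_injective _ injy]
  have cF4 : F4.card = C.card := by
    rw [hF4]
    apply Finset.card_image_of_injOn
    intro u1 hu1 u2 hu2 heq
    simp only [Sym2.eq_iff] at heq
    rcases heq with ⟨h1, h2⟩ | ⟨h1, h2⟩
    · exact h1
    · exfalso
      have hu1' : u1 ∈ C := hu1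
      have hu2' : u2 ∈ C := hu2
      rw [hC, Finset.mem_sdiff] at hu1'
      exact hu1'.2 (h1 ▸ hgAB u2 hu2')
  -- final arithmetic
  have hsum : (A ∪ B).card + (A ∩ B).card = A.card + B.card :=
    Finset.card_union_add_card_inter A B
  have hCc : C.card + (A ∪ B).card = Nv.card := by
    rw [hC]; exact Finset.card_sdiff_add_card_eq_card hABsub
  have hFle : F.card ≤ G.edgeSet.ncard := by
    rw [← Set.ncard_coe_finset]
    exact Set.ncard_le_ncard hFedge (Set.toFinite _)
  by_cases hab : (A ∩ B).Nonempty
  · have cF5 : F5.card = 0 := by rw [hF5, if_pos hab]; simp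
    have hABpos : 1 ≤ (A ∩ B).card := Finset.card_pos.mpr hab
    rw [hFcard, cF1, cF2, cF3, cF4, cF5] at hFle
    omega
  · have cF5 : F5.card = 1 := by rw [hF5, if_neg hab]; simp
    have hABzero : (A ∩ B).card = 0 := by
      rw [Finset.card_eq_zero, ← Finset.not_nonempty_iff_eq_empty]
      exact hab
    rw [hFcard, cF1, cF2, cF3, cF4, cF5] at hFle
    omega
end

section
/- For all integers n and d with 4 ≤ d ≤ n − 1, there exists a connected graph G of order n with sdiam_3(G) ≤ d and e(G) = (n−d+1)(n−d+2)/2 + d − 3; consequently e_3(n, ℓ, d) ≤ (n−d+1)(n−d+2)/2 + d − 3 for the corresponding maximum degree ℓ = n − d + 1. -/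
open SimpleGraph

def nadj (m a b : ℕ) : Prop :=
  a ≠ b ∧ ((a < m ∧ b < m) ∨
    (a = 0 ∧ b = m) ∨ (b = 0 ∧ a = m) ∨
    (1 ≤ a ∧ a < m ∧ b = m + 1) ∨ (1 ≤ b ∧ b < m ∧ a = m + 1) ∨
    (m + 1 ≤ a ∧ m + 1 ≤ b ∧ (b = a + 1 ∨ a = b + 1)))

instance (m a b : ℕ) : Decidable (nadj m a b) := by unfold nadj; infer_instance

def myG (n m : ℕ) : SimpleGraph (Fin n) where
  Adj a b := nadj m ↑a ↑b
  symm := ⟨fun a b h => by unfold nadj at *; omega⟩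
  loopless := ⟨fun a h => by unfold nadj at h; omega⟩

instance (n m : ℕ) : DecidableRel (myG n m).Adj := fun a b =>
  inferInstanceAs (Decidable (nadj m ↑a ↑b))

lemma myG_adj {n m : ℕ} {a b : Fin n} : (myG n m).Adj a b ↔ nadj m ↑a ↑b := Iff.rfl

lemma card_filter_fin (n : ℕ) (P : ℕ → Prop) [DecidablePred P] :
    ((Finset.univ : Finset (Fin n)).filter (fun a : Fin n => P ↑a)).card
      = ((Finset.range n).filter P).card := by
  have himg : ((Finset.univ : Finset (Fin n)).filter (fun a : Fin n => P ↑a)).image (Fin.val)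
      = (Finset.range n).filter P := by
    ext j
    simp only [Finset.mem_image, Finset.mem_filter, Finset.mem_univ, true_and,
      Finset.mem_range]
    constructor
    · rintro ⟨a, ha, rfl⟩; exact ⟨a.isLt, ha⟩
    · rintro ⟨h1, h2⟩; exact ⟨⟨j, h1⟩, h2, rfl⟩
  rw [← himg, Finset.card_image_of_injective _ Fin.val_injective]

lemma deg_eq {n m : ℕ} (v : Fin n) :
    (myG n m).degree v = ((Finset.range n).filter (fun j => nadj m ↑v j)).card := by
  rw [SimpleGraph.degree, SimpleGraph.neighborFinset_eq_filter]
  exact card_filter_fin n (fun j => nadj m ↑v j)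

lemma deg_cases {n m d : ℕ} (hm : 2 ≤ m) (hd : 4 ≤ d) (hn : n = m + d - 1) (v : Fin n) :
    (myG n m).degree v =
      if (v : ℕ) = m then 1 else if (v : ℕ) + 2 = m + d then 1
      else if (v : ℕ) ≤ m + 1 then m else 2 := by
  have hv := v.isLt
  rw [deg_eq]
  split_ifs with h1 h2 h3
  · have hset : (Finset.range n).filter (fun j => nadj m ↑v j) = {0} := by
      ext j; simp only [Finset.mem_filter, Finset.mem_range, Finset.mem_singleton]
      unfold nadj; omega
    rw [hset, Finset.card_singleton]
  · have hset : (Finset.range n).filter (fun j => nadj m ↑v j) = {m + d - 3} := by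
      ext j; simp only [Finset.mem_filter, Finset.mem_range, Finset.mem_singleton]
      unfold nadj; omega
    rw [hset, Finset.card_singleton]
  · rcases Nat.lt_or_ge (v : ℕ) 1 with hv0 | hv1
    · have hset : (Finset.range n).filter (fun j => nadj m ↑v j) = Finset.Icc 1 m := by
        ext j; simp only [Finset.mem_filter, Finset.mem_range, Finset.mem_Icc]
        unfold nadj; omega
      rw [hset, Nat.card_Icc]; omega
    · rcases Nat.lt_or_ge (v : ℕ) m with hvm | hvm
      · have hset : (Finset.range n).filter (fun j => nadj m ↑v j)
            = (insert (m+1) (Finset.range m)).erase ↑v := by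
          ext j
          simp only [Finset.mem_filter, Finset.mem_range, Finset.mem_erase,
            Finset.mem_insert]
          unfold nadj; omega
        rw [hset, Finset.card_erase_of_mem, Finset.card_insert_of_notMem]
        · rw [Finset.card_range]; omega
        · simp only [Finset.mem_range]; omega
        · simp only [Finset.mem_insert, Finset.mem_range]; omega
      · have hv2 : (v : ℕ) = m + 1 := by omega
        have hset : (Finset.range n).filter (fun j => nadj m ↑v j)
            = insert (m+2) (Finset.Ico 1 m) := by
          ext j
          simp only [Finset.mem_filter, Finset.mem_range, Finset.mem_insert,
            Finset.mem_Ico]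
          unfold nadj; omega
        rw [hset, Finset.card_insert_of_notMem]
        · rw [Nat.card_Ico]; omega
        · simp only [Finset.mem_Ico]; omega
  · have hset : (Finset.range n).filter (fun j => nadj m ↑v j)
        = {(v : ℕ) - 1, (v : ℕ) + 1} := by
      ext j
      simp only [Finset.mem_filter, Finset.mem_range, Finset.mem_insert,
        Finset.mem_singleton]
      unfold nadj; omega
    rw [hset, Finset.card_insert_of_notMem, Finset.card_singleton]
    simp only [Finset.mem_singleton]; omega

def df (m d i : ℕ) : ℕ :=
  if i = m then 1 else if i + 2 = m + d then 1 else if i ≤ m + 1 then m else 2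

lemma card_edges {n m d : ℕ} (hm : 2 ≤ m) (hd : 4 ≤ d) (hn : n = m + d - 1) :
    2 * (myG n m).edgeFinset.card = m * m + m + 2 * (d - 3) := by
  have hsum : ∑ v : Fin n, (myG n m).degree v = ∑ i ∈ Finset.range n, df m d i := by
    rw [← Fin.sum_univ_eq_sum_range (df m d) n]
    exact Finset.sum_congr rfl fun v _ => by rw [deg_cases hm hd hn v]; rfl
  have e1 : ∑ i ∈ Finset.Ico 0 m, df m d i = m * m := by
    rw [Finset.sum_const_nat (m := m) fun x hx => ?_, Nat.card_Ico, Nat.sub_zero]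
    · simp only [Finset.mem_Ico] at hx; unfold df; split_ifs <;> omega
  have e2 : ∑ i ∈ Finset.Ico m (m + 1), df m d i = 1 := by
    rw [Nat.Ico_succ_singleton, Finset.sum_singleton]; unfold df; split_ifs <;> omega
  have e3 : ∑ i ∈ Finset.Ico (m + 1) (m + 2), df m d i = m := by
    rw [Nat.Ico_succ_singleton, Finset.sum_singleton]; unfold df; split_ifs <;> omega
  have e4 : ∑ i ∈ Finset.Ico (m + 2) (m + d - 2), df m d i = (d - 4) * 2 := by
    rw [Finset.sum_const_nat (m := 2) fun x hx => ?_, Nat.card_Ico]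
    · omega
    · simp only [Finset.mem_Ico] at hx; unfold df; split_ifs <;> omega
  have e5 : ∑ i ∈ Finset.Ico (m + d - 2) n, df m d i = 1 := by
    have : n = (m + d - 2) + 1 := by omega
    rw [this, Nat.Ico_succ_singleton, Finset.sum_singleton]; unfold df; split_ifs <;> omega
  have c1 := Finset.sum_Ico_consecutive (df m d) (by omega : 0 ≤ m) (by omega : m ≤ n)
  have c2 := Finset.sum_Ico_consecutive (df m d) (by omega : m ≤ m + 1) (by omega : m + 1 ≤ n)
  have c3 := Finset.sum_Ico_consecutive (df m d)
    (by omega : m + 1 ≤ m + 2) (by omega : m + 2 ≤ n)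
  have c4 := Finset.sum_Ico_consecutive (df m d)
    (by omega : m + 2 ≤ m + d - 2) (by omega : m + d - 2 ≤ n)
  have htot : ∑ i ∈ Finset.range n, df m d i = m * m + m + 2 * (d - 3) := by
    rw [Finset.range_eq_Ico, ← c1, ← c2, ← c3, ← c4, e1, e2, e3, e4, e5]; omega
  rw [← SimpleGraph.sum_degrees_eq_twice_card_edges, hsum, htot]

lemma ncard_edges {n m d : ℕ} (hm : 2 ≤ m) (hd : 4 ≤ d) (hn : n = m + d - 1) :
    (myG n m).edgeSet.ncard = m * (m + 1) / 2 + d - 3 := by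
  have h := card_edges hm hd hn
  have h2 : (myG n m).edgeSet.ncard = (myG n m).edgeFinset.card := by
    rw [← SimpleGraph.coe_edgeFinset, Set.ncard_coe_finset]
  have h3 : m * (m + 1) = m * m + m := by ring
  obtain ⟨k, hk⟩ := Nat.even_mul_succ_self m
  omega

lemma maxdeg {n m d : ℕ} (hm : 2 ≤ m) (hd : 4 ≤ d) (hn : n = m + d - 1) :
    (Finset.univ.sup fun v => ((myG n m).neighborSet v).ncard) = m := by
  have key : ∀ v : Fin n, ((myG n m).neighborSet v).ncard = (myG n m).degree v := by
    intro v
    rw [SimpleGraph.degree, SimpleGraph.neighborFinset_def, Set.ncard_eq_toFinset_card']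
  apply le_antisymm
  · apply Finset.sup_le; intro v _
    rw [key, deg_cases hm hd hn v]; split_ifs <;> omega
  · have h0 : (0 : ℕ) < n := by omega
    calc m = ((myG n m).neighborSet (⟨0, h0⟩ : Fin n)).ncard := by
              rw [key, deg_cases hm hd hn]
              have hz : ((⟨0, h0⟩ : Fin n) : ℕ) = 0 := rfl
              rw [hz]; split_ifs <;> omega
      _ ≤ _ := Finset.le_sup (f := fun v => ((myG n m).neighborSet v).ncard)
                (Finset.mem_univ (⟨0, h0⟩ : Fin n))

lemma conn {n m d : ℕ} (hm : 2 ≤ m) (hd : 4 ≤ d) (hn : n = m + d - 1) :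
    (myG n m).Connected := by
  have h0 : (0 : ℕ) < n := by omega
  have reach : ∀ a : ℕ, ∀ ha : a < n, (myG n m).Reachable ⟨a, ha⟩ ⟨0, h0⟩ := by
    intro a
    induction a using Nat.strong_induction_on with
    | _ a ih =>
      intro ha
      by_cases ha0 : a = 0
      · subst ha0; exact Reachable.refl _
      · by_cases ham : a ≤ m
        · exact SimpleGraph.Adj.reachable (by show nadj m a 0; unfold nadj; omega)
        · by_cases ham1 : a = m + 1
          · have h1 : (1 : ℕ) < n := by omega
            have hadj : (myG n m).Adj ⟨a, ha⟩ ⟨1, h1⟩ := by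
              show nadj m a 1; unfold nadj; omega
            exact hadj.reachable.trans (ih 1 (by omega) h1)
          · have hprev : a - 1 < n := by omega
            have hadj : (myG n m).Adj ⟨a, ha⟩ ⟨a - 1, hprev⟩ := by
              show nadj m a (a - 1); unfold nadj; omega
            exact hadj.reachable.trans (ih (a - 1) (by omega) hprev)
  haveI : Nonempty (Fin n) := ⟨⟨0, h0⟩⟩
  exact ⟨fun u v => (reach ↑u u.isLt).trans (reach ↑v v.isLt).symm⟩

lemma ncard_walk_edges {n : ℕ} {G : SimpleGraph (Fin n)} {u v : Fin n} (p : G.Walk u v) :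
    p.toSubgraph.edgeSet.ncard ≤ p.length := by
  have h1 : p.toSubgraph.edgeSet = ↑p.edges.toFinset := by
    rw [SimpleGraph.Walk.edgeSet_toSubgraph]; ext e; simp
  rw [h1, Set.ncard_coe_finset]
  exact le_trans (List.toFinset_card_le _) (le_of_eq (SimpleGraph.Walk.length_edges p))

lemma steiner_le_one {n : ℕ} {G : SimpleGraph (Fin n)} {u v : Fin n} (p : G.Walk u v)
    (S : Set (Fin n)) (hS : ∀ s ∈ S, s ∈ p.support) : steinerDist G S ≤ p.length := by
  refine le_trans (Nat.sInf_le ⟨p.toSubgraph, p.toSubgraph_connected, ?_, rfl⟩)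
    (ncard_walk_edges p)
  intro s hs; rw [SimpleGraph.Walk.mem_verts_toSubgraph]; exact hS s hs

lemma steiner_le_two {n : ℕ} {G : SimpleGraph (Fin n)} {u1 v1 u2 v2 : Fin n}
    (p : G.Walk u1 v1) (q : G.Walk u2 v2) (x : Fin n) (hxp : x ∈ p.support)
    (hxq : x ∈ q.support) (S : Set (Fin n))
    (hS : ∀ s ∈ S, s ∈ p.support ∨ s ∈ q.support) :
    steinerDist G S ≤ p.length + q.length := by
  have hconn : (p.toSubgraph ⊔ q.toSubgraph).Connected := by
    refine SimpleGraph.Subgraph.connected_sup p.toSubgraph_connected.preconnected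
      q.toSubgraph_connected.preconnected ⟨x, ?_⟩
    simp only [SimpleGraph.Subgraph.verts_inf, Set.mem_inter_iff,
      SimpleGraph.Walk.mem_verts_toSubgraph]
    exact ⟨hxp, hxq⟩
  refine le_trans (Nat.sInf_le ⟨_, hconn, ?_, rfl⟩) ?_
  · intro s hs
    rw [SimpleGraph.Subgraph.verts_sup]
    rcases hS s hs with h | h
    · exact Or.inl ((SimpleGraph.Walk.mem_verts_toSubgraph p).2 h)
    · exact Or.inr ((SimpleGraph.Walk.mem_verts_toSubgraph q).2 h)
  · rw [SimpleGraph.Subgraph.edgeSet_sup]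
    exact le_trans (Set.ncard_union_le _ _)
      (Nat.add_le_add (ncard_walk_edges p) (ncard_walk_edges q))

lemma tailWalk {n m : ℕ} (hm1 : m + 1 < n) :
    ∀ k, m + 1 ≤ k → ∀ (hk2 : k < n),
      ∃ p : (myG n m).Walk ⟨m + 1, hm1⟩ ⟨k, hk2⟩,
        p.length = k - (m + 1) ∧
        ∀ j (hj : j < n), m + 1 ≤ j → j ≤ k → (⟨j, hj⟩ : Fin n) ∈ p.support := by
  intro k hk1
  induction k, hk1 using Nat.le_induction with
  | base =>
    intro hk2
    refine ⟨SimpleGraph.Walk.nil, by simp, ?_⟩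
    intro j hj h1 h2
    have : j = m + 1 := by omega
    subst this
    simp [SimpleGraph.Walk.support_nil]
  | succ k hk ih =>
    intro hk2
    obtain ⟨p, hl, hs⟩ := ih (by omega)
    have hadj : (myG n m).Adj ⟨k, by omega⟩ ⟨k + 1, hk2⟩ := by
      show nadj m k (k + 1); unfold nadj; omega
    refine ⟨p.concat hadj, ?_, ?_⟩
    · rw [SimpleGraph.Walk.length_concat, hl]; omega
    · intro j hj h1 h2
      rw [SimpleGraph.Walk.support_concat]
      rcases Nat.lt_or_ge j (k + 1) with h | h
      · exact List.mem_append_left _ (hs j hj h1 (by omega))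
      · have : j = k + 1 := by omega
        subst this
        apply List.mem_append_right
        simp

lemma sorted3 {n : ℕ} (x y z : Fin n) (hxy : x ≠ y) (hxz : x ≠ z) (hyz : y ≠ z) :
    ∃ a b c : Fin n, (a : ℕ) < b ∧ (b : ℕ) < c ∧
      ({x, y, z} : Set (Fin n)) = {a, b, c} := by
  have h1 : (x : ℕ) ≠ y := fun h => hxy (Fin.val_injective h)
  have h2 : (x : ℕ) ≠ z := fun h => hxz (Fin.val_injective h)
  have h3 : (y : ℕ) ≠ z := fun h => hyz (Fin.val_injective h)
  rcases Nat.lt_or_ge (x : ℕ) y with a1 | a1 <;> rcases Nat.lt_or_ge (y : ℕ) z with a2 | a2 <;>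
    rcases Nat.lt_or_ge (x : ℕ) z with a3 | a3
  · exact ⟨x, y, z, by omega, by omega, rfl⟩
  · exfalso; omega
  · exact ⟨x, z, y, by omega, by omega, by ext w; simp; tauto⟩
  · exact ⟨z, x, y, by omega, by omega, by ext w; simp; tauto⟩
  · exact ⟨y, x, z, by omega, by omega, by ext w; simp; tauto⟩
  · exact ⟨y, z, x, by omega, by omega, by ext w; simp; tauto⟩
  · exfalso; omega
  · exact ⟨z, y, x, by omega, by omega, by ext w; simp; tauto⟩

lemma steiner_three {n m d : ℕ} (hm : 2 ≤ m) (hd : 4 ≤ d) (hn : n = m + d - 1)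
    (S : Finset (Fin n)) (hS : S.card = 3) : steinerDist (myG n m) ↑S ≤ d := by
  obtain ⟨x, y, z, hxy, hxz, hyz, rfl⟩ := Finset.card_eq_three.mp hS
  have hcoe : (({x, y, z} : Finset (Fin n)) : Set (Fin n)) = {x, y, z} := by simp
  obtain ⟨a, b, c, hab, hbc, hset⟩ := sorted3 x y z hxy hxz hyz
  rw [hcoe, hset]
  have hva := a.isLt; have hvb := b.isLt; have hvc := c.isLt
  have hmem : ∀ s : Fin n, s ∈ ({a, b, c} : Set (Fin n)) → s = a ∨ s = b ∨ s = c := by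
    intro s hs; simpa [Set.mem_insert_iff, Set.mem_singleton_iff] using hs
  have h0n : (0 : ℕ) < n := by omega
  have h1n : (1 : ℕ) < n := by omega
  have hm1 : m + 1 < n := by omega
  rcases Nat.lt_or_ge (c : ℕ) m with hc | hc
  · -- C1 : all three in the clique
    have e1 : (myG n m).Adj a b := by show nadj m ↑a ↑b; unfold nadj; omega
    have e2 : (myG n m).Adj b c := by show nadj m ↑b ↑c; unfold nadj; omega
    refine le_trans (steiner_le_two (SimpleGraph.Walk.cons e1 SimpleGraph.Walk.nil)
      (SimpleGraph.Walk.cons e2 SimpleGraph.Walk.nil) b ?_ ?_ _ ?_) ?_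
    · exact SimpleGraph.Walk.end_mem_support _
    · exact SimpleGraph.Walk.start_mem_support _
    · intro s hs
      rcases hmem s hs with h | h | h
      · rw [h]; exact Or.inl (SimpleGraph.Walk.start_mem_support _)
      · rw [h]; exact Or.inl (SimpleGraph.Walk.end_mem_support _)
      · rw [h]; exact Or.inr (SimpleGraph.Walk.end_mem_support _)
    · simp only [SimpleGraph.Walk.length_cons, SimpleGraph.Walk.length_nil]; omega
  · rcases Nat.lt_or_ge (c : ℕ) (m + 1) with hc2 | hc2
    · -- C2 : c = m, a < b < m
      have e1 : (myG n m).Adj a b := by show nadj m ↑a ↑b; unfold nadj; omega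
      have e2 : (myG n m).Adj b ⟨0, h0n⟩ := by show nadj m ↑b 0; unfold nadj; omega
      have e3 : (myG n m).Adj ⟨0, h0n⟩ c := by show nadj m 0 ↑c; unfold nadj; omega
      refine le_trans (steiner_le_two (SimpleGraph.Walk.cons e1 SimpleGraph.Walk.nil)
        (SimpleGraph.Walk.cons e2 (SimpleGraph.Walk.cons e3 SimpleGraph.Walk.nil))
        b ?_ ?_ _ ?_) ?_
      · exact SimpleGraph.Walk.end_mem_support _
      · exact SimpleGraph.Walk.start_mem_support _
      · intro s hs
        rcases hmem s hs with h | h | h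
        · rw [h]; exact Or.inl (SimpleGraph.Walk.start_mem_support _)
        · rw [h]; exact Or.inl (SimpleGraph.Walk.end_mem_support _)
        · rw [h]; exact Or.inr (SimpleGraph.Walk.end_mem_support _)
      · simp only [SimpleGraph.Walk.length_cons, SimpleGraph.Walk.length_nil]; omega
    · -- c is a tail vertex
      obtain ⟨tp, htl, hts⟩ := tailWalk hm1 (c : ℕ) hc2 c.isLt
      rcases Nat.lt_or_ge (b : ℕ) m with hbm | hbm
      · -- C4 : b in the clique, 1 ≤ b < m
        have e1 : (myG n m).Adj a b := by show nadj m ↑a ↑b; unfold nadj; omega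
        have e2 : (myG n m).Adj b ⟨m + 1, hm1⟩ := by
          show nadj m ↑b (m + 1); unfold nadj; omega
        refine le_trans (steiner_le_two (SimpleGraph.Walk.cons e1 SimpleGraph.Walk.nil)
          (SimpleGraph.Walk.cons e2 tp) b ?_ ?_ _ ?_) ?_
        · exact SimpleGraph.Walk.end_mem_support _
        · exact SimpleGraph.Walk.start_mem_support _
        · intro s hs
          rcases hmem s hs with h | h | h
          · rw [h]; exact Or.inl (SimpleGraph.Walk.start_mem_support _)
          · rw [h]; exact Or.inl (SimpleGraph.Walk.end_mem_support _)
          · rw [h]; exact Or.inr (SimpleGraph.Walk.end_mem_support _)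
        · simp only [SimpleGraph.Walk.length_cons, SimpleGraph.Walk.length_nil, htl]; omega
      · rcases Nat.lt_or_ge (b : ℕ) (m + 1) with hbm1 | hbm1
        · -- C3 : b = m, a < m
          by_cases ha0 : (a : ℕ) = 0
          · have e1 : (myG n m).Adj b a := by show nadj m ↑b ↑a; unfold nadj; omega
            have e2 : (myG n m).Adj a ⟨1, h1n⟩ := by show nadj m ↑a 1; unfold nadj; omega
            have e3 : (myG n m).Adj ⟨1, h1n⟩ ⟨m + 1, hm1⟩ := by
              show nadj m 1 (m + 1); unfold nadj; omega
            refine le_trans (steiner_le_two (SimpleGraph.Walk.cons e1 SimpleGraph.Walk.nil)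
              (SimpleGraph.Walk.cons e2 (SimpleGraph.Walk.cons e3 tp)) a ?_ ?_ _ ?_) ?_
            · exact SimpleGraph.Walk.end_mem_support _
            · exact SimpleGraph.Walk.start_mem_support _
            · intro s hs
              rcases hmem s hs with h | h | h
              · rw [h]; exact Or.inr (SimpleGraph.Walk.start_mem_support _)
              · rw [h]; exact Or.inl (SimpleGraph.Walk.start_mem_support _)
              · rw [h]; exact Or.inr (SimpleGraph.Walk.end_mem_support _)
            · simp only [SimpleGraph.Walk.length_cons, SimpleGraph.Walk.length_nil, htl]
              omega
          · have e1 : (myG n m).Adj b ⟨0, h0n⟩ := by show nadj m ↑b 0; unfold nadj; omega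
            have e2 : (myG n m).Adj ⟨0, h0n⟩ a := by show nadj m 0 ↑a; unfold nadj; omega
            have e3 : (myG n m).Adj a ⟨m + 1, hm1⟩ := by
              show nadj m ↑a (m + 1); unfold nadj; omega
            refine le_trans (steiner_le_two
              (SimpleGraph.Walk.cons e1 (SimpleGraph.Walk.cons e2 SimpleGraph.Walk.nil))
              (SimpleGraph.Walk.cons e3 tp) a ?_ ?_ _ ?_) ?_
            · exact SimpleGraph.Walk.end_mem_support _
            · exact SimpleGraph.Walk.start_mem_support _
            · intro s hs
              rcases hmem s hs with h | h | h
              · rw [h]; exact Or.inr (SimpleGraph.Walk.start_mem_support _)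
              · rw [h]; exact Or.inl (SimpleGraph.Walk.start_mem_support _)
              · rw [h]; exact Or.inr (SimpleGraph.Walk.end_mem_support _)
            · simp only [SimpleGraph.Walk.length_cons, SimpleGraph.Walk.length_nil, htl]
              omega
        · -- C5 : b and c both tail vertices
          by_cases ha0 : (a : ℕ) = 0
          · have e2 : (myG n m).Adj a ⟨1, h1n⟩ := by show nadj m ↑a 1; unfold nadj; omega
            have e3 : (myG n m).Adj ⟨1, h1n⟩ ⟨m + 1, hm1⟩ := by
              show nadj m 1 (m + 1); unfold nadj; omega
            refine le_trans (steiner_le_one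
              (SimpleGraph.Walk.cons e2 (SimpleGraph.Walk.cons e3 tp)) _ ?_) ?_
            · intro s hs
              rcases hmem s hs with h | h | h
              · rw [h]; exact SimpleGraph.Walk.start_mem_support _
              · rw [h]
                simp only [SimpleGraph.Walk.support_cons]
                exact List.mem_cons_of_mem _ (List.mem_cons_of_mem _
                  (hts (b : ℕ) b.isLt hbm1 (by omega)))
              · rw [h]; exact SimpleGraph.Walk.end_mem_support _
            · simp only [SimpleGraph.Walk.length_cons, htl]; omega
          · by_cases ham : (a : ℕ) = m
            · have e1 : (myG n m).Adj a ⟨0, h0n⟩ := by show nadj m ↑a 0; unfold nadj; omega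
              have e2 : (myG n m).Adj ⟨0, h0n⟩ ⟨1, h1n⟩ := by
                show nadj m 0 1; unfold nadj; omega
              have e3 : (myG n m).Adj ⟨1, h1n⟩ ⟨m + 1, hm1⟩ := by
                show nadj m 1 (m + 1); unfold nadj; omega
              refine le_trans (steiner_le_two
                (SimpleGraph.Walk.cons e1 (SimpleGraph.Walk.cons e2 SimpleGraph.Walk.nil))
                (SimpleGraph.Walk.cons e3 tp) ⟨1, h1n⟩ ?_ ?_ _ ?_) ?_
              · exact SimpleGraph.Walk.end_mem_support _
              · exact SimpleGraph.Walk.start_mem_support _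
              · intro s hs
                rcases hmem s hs with h | h | h
                · rw [h]; exact Or.inl (SimpleGraph.Walk.start_mem_support _)
                · rw [h]
                  refine Or.inr ?_
                  simp only [SimpleGraph.Walk.support_cons]
                  exact List.mem_cons_of_mem _ (hts (b : ℕ) b.isLt hbm1 (by omega))
                · rw [h]; exact Or.inr (SimpleGraph.Walk.end_mem_support _)
              · simp only [SimpleGraph.Walk.length_cons, SimpleGraph.Walk.length_nil, htl]
                omega
            · by_cases ham2 : (a : ℕ) < m
              · have e3 : (myG n m).Adj a ⟨m + 1, hm1⟩ := by
                  show nadj m ↑a (m + 1); unfold nadj; omega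
                refine le_trans (steiner_le_one (SimpleGraph.Walk.cons e3 tp) _ ?_) ?_
                · intro s hs
                  rcases hmem s hs with h | h | h
                  · rw [h]; exact SimpleGraph.Walk.start_mem_support _
                  · rw [h]
                    simp only [SimpleGraph.Walk.support_cons]
                    exact List.mem_cons_of_mem _ (hts (b : ℕ) b.isLt hbm1 (by omega))
                  · rw [h]; exact SimpleGraph.Walk.end_mem_support _
                · simp only [SimpleGraph.Walk.length_cons, htl]; omega
              · refine le_trans (steiner_le_one tp _ ?_) ?_
                · intro s hs
                  rcases hmem s hs with h | h | h
                  · rw [h]; exact hts (a : ℕ) a.isLt (by omega) (by omega)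
                  · rw [h]; exact hts (b : ℕ) b.isLt hbm1 (by omega)
                  · rw [h]; exact SimpleGraph.Walk.end_mem_support _
                · rw [htl]; omega

set_option maxHeartbeats 1000000 in
theorem stmt19 (n d : ℕ) (hd : 4 ≤ d) (hdn : d ≤ n - 1) :
    ∃ G : SimpleGraph (Fin n), G.Connected ∧ sdiam G 3 ≤ d ∧
      maxDeg G = n - d + 1 ∧
      G.edgeSet.ncard = (n - d + 1) * (n - d + 2) / 2 + d - 3 ∧
      e3 n (n - d + 1) d ≤ ((n - d + 1) * (n - d + 2) / 2 + d - 3 : ℕ) := by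
  have hn5 : 5 ≤ n := by omega
  set m := n - d + 1 with hmdef
  have hm : 2 ≤ m := by omega
  have hn : n = m + d - 1 := by omega
  have hm2 : n - d + 2 = m + 1 := by omega
  have hmax : maxDeg (myG n m) = m := by
    unfold maxDeg; exact maxdeg hm hd hn
  have hsd : sdiam (myG n m) 3 ≤ d := by
    have h0 : (0 : ℕ) < n := by omega
    have h1 : (1 : ℕ) < n := by omega
    have h2 : (2 : ℕ) < n := by omega
    have hS0 : ({⟨0, h0⟩, ⟨1, h1⟩, ⟨2, h2⟩} : Finset (Fin n)).card = 3 := by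
      refine Finset.card_eq_three.mpr ⟨_, _, _, ?_, ?_, ?_, rfl⟩ <;>
        simp [Fin.ext_iff]
    unfold sdiam
    apply csSup_le
    · exact ⟨steinerDist (myG n m) ↑({⟨0, h0⟩, ⟨1, h1⟩, ⟨2, h2⟩} : Finset (Fin n)),
        ⟨_, hS0, rfl⟩⟩
    · rintro mm ⟨S, hS3, rfl⟩
      exact steiner_three hm hd hn S hS3
  have hedge : (myG n m).edgeSet.ncard = m * (m + 1) / 2 + d - 3 := ncard_edges hm hd hn
  refine ⟨myG n m, conn hm hd hn, hsd, hmax, ?_, ?_⟩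
  · rw [hedge, hm2]
  · rw [hm2]
    unfold e3
    exact sInf_le ⟨myG n m, hmax, hsd, by rw [hedge]⟩
end
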